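/- arXiv:1708.07657 — 4 statements merged into one kernel-verified Lean document; each statement's English description precedes it below -/
import Mathlib

section
/- Let C, t > 0 and let k ≥ 2 be an integer. There exists a constant ζ > 0, depending only on C, t, k, r and q, such that for every Borel probability measure ν on ℝ^q whose support is compact of diameter at most 1 and which satisfies ν(B(x,ε)) ≤ C·ε^t for all x ∈ ℝ^q and all ε > 0, one has e_{k-1,r}(ν)^r − e_{k,r}(ν)^r ≥ ζ. -/
open MeasureTheory Metric Set

noncomputable section

variable {E : Type*} [NormedAddCommGroup E] [NormedSpace ℝ E]
  [MeasurableSpace E] [BorelSpace E]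

/-- The (topological) support of a Borel measure: the set of points all of whose
neighborhoods have positive measure. -/
def msupp (μ : Measure E) : Set E := {x | ∀ ε : ℝ, 0 < ε → 0 < μ (ball x ε)}

/-- The set of achievable quantization integrals `∫ d(x,α)^r dν` over sets `α` with
`1 ≤ card α ≤ n`. -/
def quantSet (ν : Measure E) (r : ℝ) (n : ℕ) : Set ℝ :=
  {I | ∃ α : Finset E, α.Nonempty ∧ α.card ≤ n ∧ I = ∫ x, infDist x (α : Set E) ^ r ∂ν}

/-- The `n`-th quantization error of order `r`, raised to the power `r`:
`e_{n,r}(ν)^r = inf { ∫ d(x,α)^r dν : 1 ≤ card α ≤ n }`. -/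
def quantErrPow (ν : Measure E) (r : ℝ) (n : ℕ) : ℝ := sInf (quantSet ν r n)

/-- `α` is an `n`-optimal set for `ν` of order `r`. -/
def IsOptimalSet (ν : Measure E) (r : ℝ) (n : ℕ) (α : Finset E) : Prop :=
  α.Nonempty ∧ α.card ≤ n ∧ (∫ x, infDist x (α : Set E) ^ r ∂ν) = quantErrPow ν r n

/-- `P` is a Voronoi partition (into Borel sets) with respect to the finite set `α`. -/
def IsVoronoiPartition (α : Finset E) (P : E → Set E) : Prop :=
  (∀ a ∈ α, MeasurableSet (P a)) ∧
  ((⋃ a ∈ α, P a) = univ) ∧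
  (∀ a ∈ α, ∀ b ∈ α, a ≠ b → Disjoint (P a) (P b)) ∧
  (∀ a ∈ α, {x | dist x a < infDist x ((α : Set E) \ {a})} ⊆ P a) ∧
  (∀ a ∈ α, P a ⊆ {x | dist x a = infDist x (α : Set E)})

/-- `I_a(α,ν) = ∫_{P_a(α)} d(x,α)^r dν`. -/
def voronoiI (ν : Measure E) (r : ℝ) (α : Finset E) (P : E → Set E) (a : E) : ℝ :=
  ∫ x in P a, infDist x (α : Set E) ^ r ∂ν

/-- `μ` is `s0`-dimensional Ahlfors–David regular with constants `ε0, C1, C2`, together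
with the global upper bound (valid for all centers and radii). -/
def IsAhlfors (μ : Measure E) (s0 ε0 C1 C2 : ℝ) : Prop :=
  0 < s0 ∧ 0 < ε0 ∧ 0 < C1 ∧ 0 < C2 ∧
  (∀ x ∈ msupp μ, ∀ ε : ℝ, 0 < ε → ε < ε0 →
    ENNReal.ofReal (C1 * ε ^ s0) ≤ μ (closedBall x ε) ∧
    μ (closedBall x ε) ≤ ENNReal.ofReal (C2 * ε ^ s0)) ∧
  (∀ x : E, ∀ ε : ℝ, 0 < ε → μ (closedBall x ε) ≤ ENNReal.ofReal (C2 * ε ^ s0))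

/-- `h` is a similitude of ratio `ρ`. -/
def IsSimilitude (h : E → E) (ρ : ℝ) : Prop :=
  Function.Surjective h ∧ ∀ x y, dist (h x) (h y) = ρ * dist x y

/-- The measure `λ_B = μ(·|B) ∘ h`, i.e. `λ_B(A) = μ(h(A) ∩ B)/μ(B)`. -/
def condPull (μ : Measure E) (B : Set E) (h : E → E) : Measure E :=
  Measure.comap h (ProbabilityTheory.cond μ B)

/-- There exist `j` pairwise disjoint closed balls of radius `ρ` centered in `K`. -/
def PackingNum (K : Set E) (ρ : ℝ) (j : ℕ) : Prop :=
  ∃ c : Fin j → E, (∀ i, c i ∈ K) ∧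
    Pairwise fun i i' => Disjoint (closedBall (c i) ρ) (closedBall (c i') ρ)

end

lemma msupp_compl_null {E : Type*} [NormedAddCommGroup E] [NormedSpace ℝ E]
    [MeasurableSpace E] [BorelSpace E]
    [SecondCountableTopology E] (ν : MeasureTheory.Measure E) : ν (msupp ν)ᶜ = 0 := by
  have hx : ∀ x : ↥(msupp ν)ᶜ, ∃ ε : ℝ, 0 < ε ∧ ν (Metric.ball (x : E) ε) = 0 := by
    rintro ⟨x, hx⟩
    simp only [msupp, Set.mem_compl_iff, Set.mem_setOf_eq, not_forall] at hx
    obtain ⟨ε, hε, h⟩ := hx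
    exact ⟨ε, hε, by simpa using h⟩
  choose ε hε hν using hx
  obtain ⟨T, hTc, hTeq⟩ := TopologicalSpace.isOpen_iUnion_countable
    (fun x : ↥(msupp ν)ᶜ => Metric.ball (x : E) (ε x)) (fun x => Metric.isOpen_ball)
  have hsub : (msupp ν)ᶜ ⊆ ⋃ x ∈ T, Metric.ball (x : E) (ε x) := by
    rw [hTeq]
    intro y hy
    exact Set.mem_iUnion.2 ⟨⟨y, hy⟩, Metric.mem_ball_self (hε ⟨y, hy⟩)⟩
  refine MeasureTheory.measure_mono_null hsub ?_
  exact (MeasureTheory.measure_biUnion_null_iff hTc).2 fun x _ => hν x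


section
open Metric Set MeasureTheory ENNReal

/-- For `C, t > 0` and an integer `k ≥ 2` there is `ζ > 0` (depending only on
`C, t, k, r` and the space) such that every Borel probability measure `ν` with compact support
of diameter at most `1` satisfying `ν(B(x,ε)) ≤ C·ε^t` for all `x, ε > 0` has
`e_{k-1,r}(ν)^r − e_{k,r}(ν)^r ≥ ζ`. -/
theorem stmt6 {E : Type*} [NormedAddCommGroup E] [NormedSpace ℝ E]
    [MeasurableSpace E] [BorelSpace E] [FiniteDimensional ℝ E]
    (r : ℝ) (hr : 0 < r)
    (C t : ℝ) (hC : 0 < C) (ht : 0 < t) (k : ℕ) (hk : 2 ≤ k) :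
    ∃ ζ : ℝ, 0 < ζ ∧
      ∀ ν : MeasureTheory.Measure E, MeasureTheory.IsProbabilityMeasure ν →
        IsCompact (msupp ν) → Metric.diam (msupp ν) ≤ 1 →
        (∀ x : E, ∀ ε : ℝ, 0 < ε →
          ν (Metric.closedBall x ε) ≤ ENNReal.ofReal (C * ε ^ t)) →
        ζ ≤ quantErrPow ν r (k - 1) - quantErrPow ν r k := by
  classical
  -- the scale ε₀
  set ε₀ : ℝ := min 1 ((2 * k * C)⁻¹ ^ t⁻¹) with hε₀def
  have hk0 : (0:ℝ) < k := by positivity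
  have h2kC : (0:ℝ) < (2 * k * C)⁻¹ := by positivity
  have hε₀ : 0 < ε₀ := lt_min one_pos (Real.rpow_pos_of_pos h2kC _)
  set ρ : ℝ := ε₀ / 4 with hρdef
  have hρ : 0 < ρ := by positivity
  have hρε : ρ < ε₀ := by rw [hρdef]; linarith
  -- the bound k*C*ε₀^t ≤ 1/2
  have hεbound : (k:ℝ) * C * ε₀ ^ t ≤ 1 / 2 := by
    have h1 : ε₀ ≤ (2 * k * C)⁻¹ ^ t⁻¹ := min_le_right _ _
    have h2 : ε₀ ^ t ≤ ((2 * k * C)⁻¹ ^ t⁻¹) ^ t :=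
      Real.rpow_le_rpow hε₀.le h1 ht.le
    have h3 : ((2 * k * C)⁻¹ ^ t⁻¹) ^ t = (2 * k * C)⁻¹ := by
      rw [← Real.rpow_mul h2kC.le, inv_mul_cancel₀ ht.ne', Real.rpow_one]
    rw [h3] at h2
    have h4 : (k:ℝ) * C * ε₀ ^ t ≤ (k:ℝ) * C * (2 * k * C)⁻¹ := by
      have hkC : (0:ℝ) ≤ (k:ℝ) * C := by positivity
      nlinarith
    have h5 : (k:ℝ) * C * (2 * k * C)⁻¹ = 1 / 2 := by
      field_simp
    linarith
  -- the covering finset of the unit ball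
  obtain ⟨F, hFcov⟩ : ∃ F : Finset E, closedBall (0:E) 1 ⊆ ⋃ y ∈ F, ball y ρ := by
    have hcpt : IsCompact (closedBall (0:E) 1) := isCompact_closedBall _ _
    obtain ⟨F, hF⟩ := hcpt.elim_finite_subcover (fun y : E => ball y ρ)
      (fun y => isOpen_ball) (fun x _ => mem_iUnion.2 ⟨x, mem_ball_self hρ⟩)
    exact ⟨F, hF⟩
  have hFne : F.Nonempty := by
    have h0 : (0:E) ∈ closedBall (0:E) 1 := mem_closedBall_self one_pos.le
    obtain ⟨y, hy⟩ := mem_iUnion.1 (hFcov h0)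
    obtain ⟨hyF, -⟩ := mem_iUnion.1 hy
    exact ⟨y, hyF⟩
  set N : ℕ := F.card with hNdef
  have hN : 0 < N := Finset.card_pos.2 hFne
  set c : ℝ := ε₀ ^ r - ρ ^ r with hcdef
  have hc : 0 < c := by
    have := Real.rpow_lt_rpow hρ.le hρε hr
    rw [hcdef]; linarith
  have hNR : (0:ℝ) < ((4 * N : ℕ) : ℝ) := by positivity
  refine ⟨c * ((4 * N : ℕ) : ℝ)⁻¹, by positivity, ?_⟩
  intro ν hprob hcomp hdiam hHolder
  -- support facts
  have hnull : ν (msupp ν)ᶜ = 0 := msupp_compl_null ν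
  have hsuppne : (msupp ν).Nonempty := by
    by_contra h
    rw [Set.not_nonempty_iff_eq_empty] at h
    have huniv : ν Set.univ = 0 := by
      have hcompl : (msupp ν)ᶜ = Set.univ := by rw [h, Set.compl_empty]
      rw [← hcompl]; exact hnull
    simp [measure_univ] at huniv
  obtain ⟨x₀, hx₀⟩ := hsuppne
  have hsupp_sub : msupp ν ⊆ closedBall x₀ 1 := fun x hx =>
    mem_closedBall.2 (le_trans (dist_le_diam_of_mem hcomp.isBounded hx hx₀) hdiam)
  -- integrability of the quantization integrands
  have hint : ∀ β : Finset E, β.Nonempty →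
      MeasureTheory.Integrable (fun x => infDist x (β : Set E) ^ r) ν := by
    rintro β ⟨b₀, hb₀⟩
    have hcont : Continuous fun x => infDist x (β : Set E) ^ r :=
      (continuous_infDist_pt _).rpow_const (fun x => Or.inr hr.le)
    refine MeasureTheory.Integrable.mono'
      (MeasureTheory.integrable_const ((1 + dist x₀ b₀) ^ r)) hcont.aestronglyMeasurable ?_
    have hae : ∀ᵐ x ∂ν, x ∈ msupp ν := by
      rw [MeasureTheory.ae_iff]
      exact hnull
    filter_upwards [hae] with x hx
    have h1 : infDist x (β : Set E) ≤ 1 + dist x₀ b₀ := by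
      have h2 : infDist x (β : Set E) ≤ dist x b₀ :=
        infDist_le_dist_of_mem (by exact_mod_cast hb₀)
      have h3 : dist x b₀ ≤ dist x x₀ + dist x₀ b₀ := dist_triangle _ _ _
      have h4 : dist x x₀ ≤ 1 := hsupp_sub hx
      linarith
    rw [Real.norm_of_nonneg (Real.rpow_nonneg Metric.infDist_nonneg r)]
    exact Real.rpow_le_rpow Metric.infDist_nonneg h1 hr.le
  -- boundedness below of quantSets
  have hbdd : ∀ n : ℕ, BddBelow (quantSet ν r n) := by
    intro n
    refine ⟨0, fun I hI => ?_⟩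
    obtain ⟨α, hα1, hα2, rfl⟩ := hI
    exact MeasureTheory.integral_nonneg fun x => Real.rpow_nonneg Metric.infDist_nonneg r
  have hne : (quantSet ν r (k - 1)).Nonempty := by
    refine ⟨_, {x₀}, ⟨x₀, Finset.mem_singleton_self x₀⟩, ?_, rfl⟩
    simp only [Finset.card_singleton]
    omega
  -- the key micro improvement
  have key : ∀ α : Finset E, α.Nonempty → α.card ≤ k - 1 →
      ∃ I ∈ quantSet ν r k,
        I ≤ (∫ x, infDist x (α : Set E) ^ r ∂ν) - c * ((4 * N : ℕ) : ℝ)⁻¹ := by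
    intro α hαne hαcard
    set S : Set E := {x | ε₀ < infDist x (α : Set E)} with hSdef
    have hSopen : IsOpen S := isOpen_lt continuous_const (continuous_infDist_pt _)
    -- complement of S has small measure
    have hScompl : ν Sᶜ ≤ 2⁻¹ := by
      have hsub : Sᶜ ⊆ ⋃ a ∈ α, closedBall a ε₀ := by
        intro x hx
        simp only [hSdef, Set.mem_compl_iff, Set.mem_setOf_eq, not_lt] at hx
        obtain ⟨a, haα, hadist⟩ := (α.finite_toSet.isCompact).exists_infDist_eq_dist
          (by exact_mod_cast hαne) x
        refine Set.mem_iUnion₂.2 ⟨a, by exact_mod_cast haα, ?_⟩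
        rw [mem_closedBall]
        calc dist x a = infDist x (α : Set E) := hadist.symm
        _ ≤ ε₀ := hx
      calc ν Sᶜ ≤ ∑ a ∈ α, ν (closedBall a ε₀) :=
            le_trans (measure_mono hsub) (MeasureTheory.measure_biUnion_finset_le _ _)
        _ ≤ ∑ _a ∈ α, ENNReal.ofReal (C * ε₀ ^ t) :=
            Finset.sum_le_sum fun a _ => hHolder a ε₀ hε₀
        _ = α.card • ENNReal.ofReal (C * ε₀ ^ t) := by rw [Finset.sum_const]
        _ = (α.card : ℝ≥0∞) * ENNReal.ofReal (C * ε₀ ^ t) := by rw [nsmul_eq_mul]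
        _ ≤ (k : ℝ≥0∞) * ENNReal.ofReal (C * ε₀ ^ t) := by
            gcongr
            exact_mod_cast le_trans hαcard (Nat.sub_le k 1)
        _ = ENNReal.ofReal ((k : ℝ) * (C * ε₀ ^ t)) := by
            rw [← ENNReal.ofReal_natCast k, ← ENNReal.ofReal_mul (Nat.cast_nonneg k)]
        _ ≤ ENNReal.ofReal (1 / 2) := by
            apply ENNReal.ofReal_le_ofReal
            calc (k:ℝ) * (C * ε₀ ^ t) = (k:ℝ) * C * ε₀ ^ t := by ring
            _ ≤ 1/2 := hεbound
        _ = 2⁻¹ := by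
            rw [show (1:ℝ)/2 = 2⁻¹ by norm_num, ENNReal.ofReal_inv_of_pos two_pos]
            norm_num
    have hSmeas : 2⁻¹ ≤ ν S := by
      have h1 : ν S + ν Sᶜ = 1 := by
        rw [MeasureTheory.measure_add_measure_compl hSopen.measurableSet]
        exact measure_univ
      have h2 : (1:ℝ≥0∞) ≤ ν S + 2⁻¹ := by
        rw [← h1]; exact add_le_add le_rfl hScompl
      have h3 : (1:ℝ≥0∞) - 2⁻¹ ≤ ν S := tsub_le_iff_right.2 h2
      calc (2⁻¹ : ℝ≥0∞) = 1 - 2⁻¹ := by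
            rw [← ENNReal.inv_two_add_inv_two, ENNReal.add_sub_cancel_right (by norm_num)]
      _ ≤ ν S := h3
    -- pigeonhole over the cover
    have hpigeon : ∃ y ∈ F, ((4 * N : ℕ) : ℝ≥0∞)⁻¹ ≤ ν (S ∩ ball (x₀ + y) ρ) := by
      by_contra hcon
      push_neg at hcon
      have hcov2 : S ∩ msupp ν ⊆ ⋃ y ∈ F, (S ∩ ball (x₀ + y) ρ) := by
        rintro x ⟨hxS, hxsupp⟩
        have hx1 : x - x₀ ∈ closedBall (0:E) 1 := by
          rw [mem_closedBall, dist_zero_right, ← dist_eq_norm]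
          exact hsupp_sub hxsupp
        obtain ⟨y, hy⟩ := mem_iUnion.1 (hFcov hx1)
        obtain ⟨hyF, hyb⟩ := mem_iUnion.1 hy
        refine Set.mem_iUnion₂.2 ⟨y, hyF, hxS, ?_⟩
        rw [mem_ball] at hyb ⊢
        rw [dist_eq_norm] at hyb ⊢
        have heq : x - (x₀ + y) = x - x₀ - y := by abel
        rw [heq]
        exact hyb
      have hb1 : ν S ≤ ν (S ∩ msupp ν) + ν (S \ msupp ν) :=
        measure_le_inter_add_diff ν S (msupp ν)
      have hb2 : ν (S \ msupp ν) = 0 :=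
        MeasureTheory.measure_mono_null (Set.diff_subset_compl _ _) hnull
      have hb3 : ν (S ∩ msupp ν) ≤ ∑ y ∈ F, ν (S ∩ ball (x₀ + y) ρ) :=
        le_trans (measure_mono hcov2) (MeasureTheory.measure_biUnion_finset_le _ _)
      have hb4 : ∑ y ∈ F, ν (S ∩ ball (x₀ + y) ρ) ≤ N • ((4 * N : ℕ) : ℝ≥0∞)⁻¹ :=
        Finset.sum_le_card_nsmul _ _ _ fun y hy => (hcon y hy).le
      have hb5 : (N • ((4 * N : ℕ) : ℝ≥0∞)⁻¹ : ℝ≥0∞) = 4⁻¹ := by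
        rw [nsmul_eq_mul]
        have hc4 : ((4 * N : ℕ) : ℝ≥0∞) = 4 * (N : ℝ≥0∞) := by push_cast; ring
        rw [hc4, ENNReal.mul_inv (Or.inl (by norm_num)) (Or.inl (by norm_num))]
        rw [← mul_assoc, mul_comm (N:ℝ≥0∞) (4⁻¹:ℝ≥0∞), mul_assoc,
          ENNReal.mul_inv_cancel (by exact_mod_cast hN.ne') (ENNReal.natCast_ne_top N), mul_one]
      have hfinal : (2⁻¹ : ℝ≥0∞) ≤ 4⁻¹ := by
        calc (2⁻¹:ℝ≥0∞) ≤ ν S := hSmeas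
        _ ≤ ν (S ∩ msupp ν) + ν (S \ msupp ν) := hb1
        _ = ν (S ∩ msupp ν) := by rw [hb2, add_zero]
        _ ≤ ∑ y ∈ F, ν (S ∩ ball (x₀ + y) ρ) := hb3
        _ ≤ N • ((4 * N : ℕ) : ℝ≥0∞)⁻¹ := hb4
        _ = 4⁻¹ := hb5
      rw [ENNReal.inv_le_inv] at hfinal
      have : (4:ℝ≥0∞) ≤ 2 := hfinal
      norm_num at this
    obtain ⟨y, hyF, hyT⟩ := hpigeon
    set b : E := x₀ + y with hbdef
    set T : Set E := S ∩ ball b ρ with hTdef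
    have hTmeas : MeasurableSet T := (hSopen.inter isOpen_ball).measurableSet
    set β : Finset E := insert b α with hβdef
    have hβne : β.Nonempty := ⟨b, Finset.mem_insert_self b α⟩
    have hβcard : β.card ≤ k := by
      have h1 : β.card ≤ α.card + 1 := Finset.card_insert_le b α
      omega
    have hβcoe : (β : Set E) = insert b (α : Set E) := Finset.coe_insert b α
    have hf := hint α hαne
    have hg := hint β hβne
    -- pointwise comparison
    have hgle : ∀ x, infDist x (β : Set E) ^ r ≤ infDist x (α : Set E) ^ r := by
      intro x
      refine Real.rpow_le_rpow Metric.infDist_nonneg ?_ hr.le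
      refine infDist_le_infDist_of_subset ?_ (by exact_mod_cast hαne)
      rw [hβcoe]
      exact Set.subset_insert _ _
    -- on T, the improvement is at least c
    have hconst : ∀ x ∈ T, c ≤ infDist x (α : Set E) ^ r - infDist x (β : Set E) ^ r := by
      rintro x ⟨hxS, hxB⟩
      have h1 : ε₀ ^ r ≤ infDist x (α : Set E) ^ r :=
        Real.rpow_le_rpow hε₀.le (le_of_lt hxS) hr.le
      have h2 : infDist x (β : Set E) ^ r ≤ ρ ^ r := by
        refine Real.rpow_le_rpow Metric.infDist_nonneg ?_ hr.le
        calc infDist x (β : Set E) ≤ dist x b := by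
              refine infDist_le_dist_of_mem ?_
              rw [hβcoe]; exact Set.mem_insert _ _
        _ ≤ ρ := (mem_ball.1 hxB).le
      rw [hcdef]; linarith
    have hi1 : c * (ν T).toReal ≤
        ∫ x in T, (infDist x (α : Set E) ^ r - infDist x (β : Set E) ^ r) ∂ν :=
      by have := MeasureTheory.setIntegral_ge_of_const_le hTmeas (measure_ne_top ν T) hconst
           (hf.sub hg).integrableOn
         rw [smul_eq_mul, mul_comm] at this; exact this
    have hi2 : (∫ x in T, (infDist x (α : Set E) ^ r - infDist x (β : Set E) ^ r) ∂ν) ≤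
        ∫ x, (infDist x (α : Set E) ^ r - infDist x (β : Set E) ^ r) ∂ν :=
      MeasureTheory.setIntegral_le_integral (hf.sub hg)
        (Filter.Eventually.of_forall fun x => sub_nonneg.2 (hgle x))
    have hi3 : (∫ x, (infDist x (α : Set E) ^ r - infDist x (β : Set E) ^ r) ∂ν) =
        (∫ x, infDist x (α : Set E) ^ r ∂ν) - ∫ x, infDist x (β : Set E) ^ r ∂ν :=
      MeasureTheory.integral_sub hf hg
    have hi4 : ((4 * N : ℕ) : ℝ)⁻¹ ≤ (ν T).toReal := by
      have h1 := ENNReal.toReal_mono (measure_ne_top ν T) hyT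
      rwa [ENNReal.toReal_inv, ENNReal.toReal_natCast] at h1
    have hi5 : c * ((4 * N : ℕ) : ℝ)⁻¹ ≤ c * (ν T).toReal :=
      mul_le_mul_of_nonneg_left hi4 hc.le
    refine ⟨∫ x, infDist x (β : Set E) ^ r ∂ν, ⟨β, hβne, hβcard, rfl⟩, ?_⟩
    have hchain : c * ((4 * N : ℕ) : ℝ)⁻¹ ≤
        (∫ x, infDist x (α : Set E) ^ r ∂ν) - ∫ x, infDist x (β : Set E) ^ r ∂ν :=
      le_trans hi5 (le_trans hi1 (hi2.trans_eq hi3))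
    linarith [hchain]
  -- conclusion
  have main : ∀ δ : ℝ, 0 < δ →
      quantErrPow ν r k ≤ quantErrPow ν r (k - 1) - c * ((4 * N : ℕ) : ℝ)⁻¹ + δ := by
    intro δ hδ
    have hlt : sInf (quantSet ν r (k-1)) < sInf (quantSet ν r (k-1)) + δ :=
      lt_add_of_pos_right _ hδ
    obtain ⟨a, ha, halt⟩ := (csInf_lt_iff (hbdd _) hne).1 hlt
    obtain ⟨α, hα1, hα2, rfl⟩ := ha
    obtain ⟨I, hI, hIle⟩ := key α hα1 hα2
    have h2 : quantErrPow ν r k ≤ I := csInf_le (hbdd k) hI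
    simp only [quantErrPow] at *
    linarith
  have hfin := le_of_forall_pos_le_add main
  linarith

end
end

section
/- Let C, t > 0 and let n ≥ 1 be an integer. There exists a constant d_n > 0, depending only on C, t, n, r and q, such that for every Borel probability measure ν on ℝ^q whose support is compact of diameter at most 1 and which satisfies ν(B(x,ε)) ≤ C·ε^t for all x ∈ ℝ^q and all ε > 0, every n-optimal set α_n ∈ C_{n,r}(ν), and every Voronoi partition (P_a(α_n))_{a∈α_n}: min_{a∈α_n} I_a(α_n,ν) > d_n. -/
open MeasureTheory Metric Set

section Aux
set_option linter.unusedSectionVars false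

open scoped ENNReal

variable {E : Type*} [NormedAddCommGroup E] [NormedSpace ℝ E]
  [MeasurableSpace E] [BorelSpace E]


theorem msupp_compl_null_s7 [SecondCountableTopology E] (ν : Measure E) :
    ν (msupp ν)ᶜ = 0 := by
  classical
  set S : Set (Set E) := {s | IsOpen s ∧ ν s = 0} with hS
  obtain ⟨T, hTc, hTS, hTU⟩ := TopologicalSpace.isOpen_sUnion_countable S (fun s hs => hs.1)
  have hsub : (msupp ν)ᶜ ⊆ ⋃₀ S := by
    intro x hx
    simp only [msupp, mem_compl_iff, mem_setOf_eq, not_forall] at hx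
    obtain ⟨ε, hε, hν⟩ := hx
    have : ν (ball x ε) = 0 := by
      simpa using (not_lt.mp hν)
    exact ⟨ball x ε, ⟨isOpen_ball, this⟩, mem_ball_self hε⟩
  have hT0 : ν (⋃₀ T) = 0 :=
    (measure_sUnion_null_iff hTc).mpr (fun s hs => (hTS hs).2)
  exact measure_mono_null (hTU ▸ hsub) hT0

theorem msupp_nonempty [SecondCountableTopology E] (ν : Measure E) [IsProbabilityMeasure ν] :
    (msupp ν).Nonempty := by
  by_contra h
  rw [not_nonempty_iff_eq_empty] at h
  have := msupp_compl_null_s7 ν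
  rw [h, compl_empty] at this
  simpa [this] using (measure_univ (μ := ν))

theorem integrable_infDist_rpow (ν : Measure E) [IsFiniteMeasure ν] {K : Set E}
    (hK : ν Kᶜ = 0) {s : Set E} {M r : ℝ} (hr : 0 ≤ r)
    (hM : ∀ x ∈ K, infDist x s ≤ M) :
    Integrable (fun x => infDist x s ^ r) ν := by
  have hcont : Continuous fun x => infDist x s ^ r :=
    (continuous_infDist_pt s).rpow_const (fun x => Or.inr hr)
  refine Integrable.mono' (integrable_const ((max M 0) ^ r))
    hcont.aestronglyMeasurable ?_
  have : {x | ¬ ‖infDist x s ^ r‖ ≤ (max M 0) ^ r} ⊆ Kᶜ := by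
    intro x hx
    simp only [mem_setOf_eq, not_le] at hx
    intro hxK
    have h1 : infDist x s ≤ max M 0 := le_trans (hM x hxK) (le_max_left _ _)
    have h2 : infDist x s ^ r ≤ (max M 0) ^ r :=
      Real.rpow_le_rpow infDist_nonneg h1 hr
    rw [Real.norm_eq_abs, abs_of_nonneg (Real.rpow_nonneg infDist_nonneg r)] at hx
    exact absurd h2 (not_le.mpr hx)
  exact (ae_iff).mpr (measure_mono_null this hK)

theorem exists_coverN [FiniteDimensional ℝ E] {ρ : ℝ} (hρ : 0 < ρ) :
    ∃ N : ℕ, 0 < N ∧ ∀ K : Set E, K.Nonempty → Bornology.IsBounded K → Metric.diam K ≤ 1 →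
      ∃ F : Finset E, ↑F ⊆ K ∧ F.Nonempty ∧ F.card ≤ N ∧
        K ⊆ ⋃ y ∈ F, closedBall y (2*ρ) := by
  classical
  set μ := (Module.finBasis ℝ E).addHaar with hμ
  set dd := Module.finrank ℝ E with hdd
  set V := μ (ball 0 1) with hV
  have hV0 : V ≠ 0 := (measure_ball_pos μ 0 one_pos).ne'
  have hVtop : V ≠ ⊤ := measure_ball_lt_top.ne
  set A : ℝ≥0∞ := ENNReal.ofReal (ρ^dd) * V with hA
  set Bq : ℝ≥0∞ := ENNReal.ofReal ((1+ρ)^dd) * V with hBq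
  have hA0 : A ≠ 0 := by
    simp only [hA, ne_eq, mul_eq_zero, not_or]
    exact ⟨by simp [ENNReal.ofReal_eq_zero, not_le]; positivity, hV0⟩
  have hAtop : A ≠ ⊤ := ENNReal.mul_ne_top ENNReal.ofReal_ne_top hVtop
  have hBtop : Bq ≠ ⊤ := ENNReal.mul_ne_top ENNReal.ofReal_ne_top hVtop
  refine ⟨⌊(Bq/A).toReal⌋₊ + 1, Nat.succ_pos _, ?_⟩
  intro K hKne hKb hKd
  obtain ⟨y0, hy0⟩ := id hKne
  have key : ∀ F : Finset E, ↑F ⊆ K → (∀ x ∈ F, ∀ y ∈ F, x ≠ y → 2*ρ < dist x y) →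
      F.card ≤ ⌊(Bq/A).toReal⌋₊ := by
    intro F hFK hFsep
    have hdisj : (↑F : Set E).PairwiseDisjoint (fun x => closedBall x ρ) := by
      intro x hx y hy hxy
      exact closedBall_disjoint_closedBall (by
        have := hFsep x hx y hy hxy; linarith)
    have hsub : (⋃ x ∈ F, closedBall x ρ) ⊆ closedBall y0 (1+ρ) := by
      intro z hz
      simp only [mem_iUnion, exists_prop] at hz
      obtain ⟨x, hxF, hzx⟩ := hz
      have hxy0 : dist x y0 ≤ 1 := le_trans (dist_le_diam_of_mem hKb (hFK hxF) hy0) hKd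
      have : dist z y0 ≤ dist z x + dist x y0 := dist_triangle _ _ _
      simp only [mem_closedBall] at hzx ⊢
      linarith
    have h1 : (F.card : ℝ≥0∞) * A ≤ Bq := by
      have e1 : ∑ x ∈ F, μ (closedBall x ρ) = (F.card : ℝ≥0∞) * A := by
        rw [Finset.sum_congr rfl (fun x _ => Measure.addHaar_closedBall μ x hρ.le)]
        simp [Finset.sum_const, nsmul_eq_mul, hA, hV, hdd]
      calc (F.card : ℝ≥0∞) * A = μ (⋃ x ∈ F, closedBall x ρ) := by
            rw [← e1, measure_biUnion_finset hdisj (fun x _ => measurableSet_closedBall)]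
        _ ≤ μ (closedBall y0 (1+ρ)) := measure_mono hsub
        _ = Bq := by rw [Measure.addHaar_closedBall μ y0 (by positivity)]
    have h2 : (F.card : ℝ≥0∞) ≤ Bq / A :=
      (ENNReal.le_div_iff_mul_le (Or.inl hA0) (Or.inl hAtop)).mpr h1
    have hdivtop : Bq / A ≠ ⊤ := by
      simp only [Ne, ENNReal.div_eq_top, not_or]
      exact ⟨fun h => absurd h.2 hA0, fun h => absurd h.1 hBtop⟩
    have h3 : (F.card : ℝ) ≤ (Bq/A).toReal := by
      have := ENNReal.toReal_mono hdivtop h2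
      simpa using this
    exact Nat.le_floor h3
  set 𝒞 : Set (Finset E) := {F | ↑F ⊆ K ∧ ∀ x ∈ F, ∀ y ∈ F, x ≠ y → 2*ρ < dist x y} with h𝒞
  have hC1 : ({y0} : Finset E) ∈ 𝒞 := by
    constructor
    · simpa using hy0
    · intro x hx y hy hxy
      simp only [Finset.mem_singleton] at hx hy
      exact absurd (hx.trans hy.symm) hxy
  set cards := Finset.card '' 𝒞 with hcards
  have hbdd : BddAbove cards := ⟨⌊(Bq/A).toReal⌋₊, fun k hk => by
    obtain ⟨F, hF, rfl⟩ := hk; exact key F hF.1 hF.2⟩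
  have hne : cards.Nonempty := ⟨1, ⟨{y0}, hC1, rfl⟩⟩
  obtain ⟨F, hF𝒞, hFcard⟩ := Nat.sSup_mem hne hbdd
  have hFone : 1 ≤ F.card := by
    rw [hFcard]
    exact le_csSup hbdd ⟨{y0}, hC1, rfl⟩
  refine ⟨F, hF𝒞.1, Finset.card_pos.mp hFone, le_trans (key F hF𝒞.1 hF𝒞.2) (Nat.le_succ _), ?_⟩
  intro x hx
  by_contra hxc
  simp only [mem_iUnion, exists_prop, not_exists, not_and, mem_closedBall, not_le] at hxc
  have hxF : x ∉ F := by
    intro h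
    have := hxc x h
    simp only [dist_self] at this
    linarith
  have hins : insert x F ∈ 𝒞 := by
    constructor
    · intro z hz
      rcases Finset.mem_insert.mp hz with rfl | hz
      · exact hx
      · exact hF𝒞.1 hz
    · intro u hu v hv huv
      rcases Finset.mem_insert.mp hu with hux | huF
      · subst hux
        rcases Finset.mem_insert.mp hv with hvx | hvF
        · exact absurd hvx.symm huv
        · exact hxc v hvF
      · rcases Finset.mem_insert.mp hv with hvx | hvF
        · subst hvx
          rw [dist_comm]
          exact hxc u huF
        · exact hF𝒞.2 u huF v hvF huv
  have : F.card + 1 ≤ sSup cards := by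
    have : (insert x F).card ∈ cards := ⟨insert x F, hins, rfl⟩
    have h := le_csSup hbdd this
    rwa [Finset.card_insert_of_notMem hxF] at h
  omega


end Aux

open scoped ENNReal


set_option maxHeartbeats 1000000 in
/-- For `C, t > 0` and an integer `n ≥ 1` there is `d_n > 0` (depending only on
`C, t, n, r` and the space) such that for every Borel probability measure `ν` with compact
support of diameter at most `1` satisfying `ν(B(x,ε)) ≤ C·ε^t`, every `n`-optimal set `α` and
every Voronoi partition `P`: `min_{a∈α} I_a(α,ν) > d_n`. -/
theorem stmt7 {E : Type*} [NormedAddCommGroup E] [NormedSpace ℝ E]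
    [MeasurableSpace E] [BorelSpace E] [FiniteDimensional ℝ E]
    (r : ℝ) (hr : 0 < r)
    (C t : ℝ) (hC : 0 < C) (ht : 0 < t) (n : ℕ) (hn : 1 ≤ n) :
    ∃ d : ℝ, 0 < d ∧
      ∀ ν : MeasureTheory.Measure E, MeasureTheory.IsProbabilityMeasure ν →
        IsCompact (msupp ν) → Metric.diam (msupp ν) ≤ 1 →
        (∀ x : E, ∀ ε : ℝ, 0 < ε →
          ν (Metric.closedBall x ε) ≤ ENNReal.ofReal (C * ε ^ t)) →
        ∀ α : Finset E, IsOptimalSet ν r n α →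
          ∀ P : E → Set E, IsVoronoiPartition α P →
            ∀ a ∈ α, d < voronoiI ν r α P a := by
  classical
  have hn' : (0:ℝ) < n := by exact_mod_cast hn
  -- ε1 : radius with n * C * ε1^t ≤ 1/2
  set ε1 : ℝ := min 1 ((2*n*C)⁻¹ ^ t⁻¹) with hε1def
  have hε1pos : 0 < ε1 := lt_min one_pos (Real.rpow_pos_of_pos (by positivity) _)
  have hε1t : (n : ℝ) * (C * ε1 ^ t) ≤ 1/2 := by
    have h1 : ε1 ^ t ≤ (2*n*C)⁻¹ := by
      have h2 : ε1 ≤ (2*n*C)⁻¹ ^ t⁻¹ := min_le_right _ _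
      calc ε1 ^ t ≤ ((2*n*C)⁻¹ ^ t⁻¹) ^ t := Real.rpow_le_rpow hε1pos.le h2 ht.le
        _ = (2*n*C)⁻¹ := Real.rpow_inv_rpow (by positivity) ht.ne'
    calc (n:ℝ) * (C * ε1^t) ≤ (n:ℝ) * (C * (2*n*C)⁻¹) := by
          apply mul_le_mul_of_nonneg_left (mul_le_mul_of_nonneg_left h1 hC.le) (by positivity)
      _ = 1/2 := by field_simp
  obtain ⟨N, hN0, hcovN⟩ := exists_coverN (E := E) (ρ := ε1/4) (by positivity)
  have hNR : (1:ℝ) ≤ N := by exact_mod_cast hN0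
  have hNpos : (0:ℝ) < N := by linarith
  set g0 : ℝ := ε1 ^ r - (ε1/2) ^ r with hg0def
  have hg0pos : 0 < g0 := by
    have := Real.rpow_lt_rpow (by positivity : (0:ℝ) ≤ ε1/2) (by linarith : ε1/2 < ε1) hr
    simpa [hg0def, sub_pos] using this
  set p0 : ℝ := g0 / (2*N*(1+g0)) with hp0def
  have hp0pos : 0 < p0 := by rw [hp0def]; positivity
  have hp0le1 : p0 ≤ 1 := by
    rw [hp0def, div_le_one (by positivity)]
    nlinarith
  set ε2 : ℝ := min 1 ((p0/(2*C)) ^ t⁻¹) with hε2def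
  have hε2pos : 0 < ε2 := lt_min one_pos (Real.rpow_pos_of_pos (by positivity) _)
  have hε2t : C * ε2 ^ t ≤ p0/2 := by
    have h1 : ε2 ^ t ≤ p0/(2*C) := by
      have h2 : ε2 ≤ (p0/(2*C)) ^ t⁻¹ := min_le_right _ _
      calc ε2 ^ t ≤ ((p0/(2*C)) ^ t⁻¹) ^ t := Real.rpow_le_rpow hε2pos.le h2 ht.le
        _ = p0/(2*C) := Real.rpow_inv_rpow (by positivity) ht.ne'
    calc C * ε2 ^ t ≤ C * (p0/(2*C)) := mul_le_mul_of_nonneg_left h1 hC.le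
      _ = p0/2 := by field_simp
  have hε2r : (0:ℝ) < ε2 ^ r := Real.rpow_pos_of_pos hε2pos _
  refine ⟨ε2 ^ r * p0 / 4, by positivity, ?_⟩
  intro ν hprob hcpt hdiam hup α hopt P hPvor a ha
  obtain ⟨hαne, hαcard, hopte⟩ := hopt
  obtain ⟨hPm, hPu, hPd, _hP4, hP5⟩ := hPvor
  set K := msupp ν with hKdef
  have hKc : ν Kᶜ = 0 := msupp_compl_null_s7 ν
  have hKne : K.Nonempty := msupp_nonempty ν
  obtain ⟨y0, hy0⟩ := id hKne
  have hKb := hcpt.isBounded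
  have hdist1 : ∀ x ∈ K, ∀ y ∈ K, dist x y ≤ 1 := fun x hx y hy =>
    le_trans (dist_le_diam_of_mem hKb hx hy) hdiam
  have haeK : ∀ᵐ x ∂ν, x ∈ K := by
    rw [ae_iff]
    exact hKc
  -- integrability
  have hint : ∀ s : Finset E, s.Nonempty →
      Integrable (fun x => infDist x (s:Set E) ^ r) ν := by
    intro s hs
    obtain ⟨b0, hb0⟩ := hs
    refine integrable_infDist_rpow ν hKc hr.le (M := 1 + dist y0 b0) ?_
    intro x hx
    calc infDist x (s:Set E) ≤ dist x b0 := infDist_le_dist_of_mem (Finset.mem_coe.mpr hb0)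
      _ ≤ dist x y0 + dist y0 b0 := dist_triangle _ _ _
      _ ≤ 1 + dist y0 b0 := by have := hdist1 x hx y0 hy0; linarith
  have hnonneg : ∀ (s : Finset E) (x : E), 0 ≤ infDist x (s:Set E) ^ r := fun s x =>
    Real.rpow_nonneg infDist_nonneg r
  have hbddB : BddBelow (quantSet ν r n) := ⟨0, fun I hI => by
    obtain ⟨s, _, _, rfl⟩ := hI
    exact integral_nonneg (fun x => hnonneg s x)⟩
  have hPa_meas : MeasurableSet (P a) := hPm a ha
  have hIa_nonneg : 0 ≤ voronoiI ν r α P a :=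
    setIntegral_nonneg hPa_meas (fun x _ => hnonneg α x)
  -- splitting of integrals over the Voronoi partition
  have hpairwise : Set.Pairwise (↑α : Set E) (Function.onFun Disjoint P) :=
    fun x hx y hy hxy => hPd x (Finset.mem_coe.mp hx) y (Finset.mem_coe.mp hy) hxy
  have hsplit : ∀ s : Finset E, s.Nonempty →
      ∫ x, infDist x (s:Set E) ^ r ∂ν = ∑ b ∈ α, ∫ x in P b, infDist x (s:Set E) ^ r ∂ν := by
    intro s hs
    rw [← setIntegral_univ, ← hPu]
    exact integral_biUnion_finset α (fun b hb => hPm b hb) hpairwise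
      (fun b _ => (hint s hs).integrableOn)
  -- STEP A : every optimal cell has mass at least p0
  have hmass : p0 ≤ (ν (P a)).toReal := by
    rcases Nat.lt_or_ge α.card 2 with hc | hc
    · -- singleton case
      have hcard1 : α.card = 1 :=
        le_antisymm (by omega) (Finset.one_le_card.mpr hαne)
      have hαa : α = {a} :=
        Finset.eq_singleton_iff_unique_mem.mpr
          ⟨ha, fun b hb => Finset.card_le_one.mp hcard1.le b hb a ha⟩
      have hPuniv : P a = univ := by
        rw [hαa] at hPu
        simpa using hPu
      rw [hPuniv]
      simpa using hp0le1
    · -- main case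
      set β := α.erase a with hβdef
      have hβcard : β.card = α.card - 1 := Finset.card_erase_of_mem ha
      have hβne : β.Nonempty := Finset.card_pos.mp (by omega)
      have hβsubα : β ⊆ α := Finset.erase_subset _ _
      set S : Set E := {x | ε1 < infDist x (β:Set E)} with hSdef
      have hSmeas : MeasurableSet S :=
        (isOpen_lt continuous_const (continuous_infDist_pt _)).measurableSet
      have hScompl : (ν Sᶜ).toReal ≤ 1/2 := by
        have hsub : Sᶜ ⊆ ⋃ b ∈ β, closedBall b ε1 := by
          intro x hx
          simp only [hSdef, mem_compl_iff, mem_setOf_eq, not_lt] at hx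
          obtain ⟨b, hbβ, hbd⟩ := ((β : Set E).toFinite.isCompact).exists_infDist_eq_dist
            (Finset.coe_nonempty.mpr hβne) x
          simp only [mem_iUnion, exists_prop]
          exact ⟨b, Finset.mem_coe.mp hbβ, mem_closedBall.mpr (by rw [← hbd]; exact hx)⟩
        have h1 : ν Sᶜ ≤ ∑ b ∈ β, ν (closedBall b ε1) :=
          le_trans (measure_mono hsub) (measure_biUnion_finset_le _ _)
        have h2 : ∑ b ∈ β, ν (closedBall b ε1) ≤ ∑ _b ∈ β, ENNReal.ofReal (C * ε1 ^ t) :=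
          Finset.sum_le_sum (fun b _ => hup b ε1 hε1pos)
        have h3 : ν Sᶜ ≤ (β.card : ℝ≥0∞) * ENNReal.ofReal (C * ε1 ^ t) := by
          refine le_trans (le_trans h1 h2) ?_
          simp [Finset.sum_const, nsmul_eq_mul]
        have hβn : (β.card : ℝ) ≤ (n : ℝ) := by
          have : β.card ≤ n := le_trans (Finset.card_le_card hβsubα) hαcard
          exact_mod_cast this
        calc (ν Sᶜ).toReal ≤ ((β.card : ℝ≥0∞) * ENNReal.ofReal (C*ε1^t)).toReal :=
              ENNReal.toReal_mono (ENNReal.mul_ne_top (by simp) ENNReal.ofReal_ne_top) h3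
          _ = (β.card : ℝ) * (C * ε1^t) := by
              rw [ENNReal.toReal_mul, ENNReal.toReal_ofReal (by positivity)]
              simp
          _ ≤ (n:ℝ) * (C*ε1^t) := mul_le_mul_of_nonneg_right hβn (by positivity)
          _ ≤ 1/2 := hε1t
      have hSν : 1/2 ≤ (ν S).toReal := by
        have hcp := measure_add_measure_compl (μ := ν) hSmeas
        rw [measure_univ] at hcp
        have h1 : (ν S).toReal + (ν Sᶜ).toReal = 1 := by
          rw [← ENNReal.toReal_add (measure_ne_top _ _) (measure_ne_top _ _), hcp,
            ENNReal.toReal_one]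
        linarith
      -- cover and pigeonhole
      obtain ⟨F, hFK, hFne, hFcard, hFcov⟩ := hcovN K hKne hKb hdiam
      have h2ρ : 2 * (ε1/4) = ε1/2 := by ring
      rw [h2ρ] at hFcov
      have hpig : ∃ x0 ∈ F, 1/(2*N) ≤ (ν (S ∩ closedBall x0 (ε1/2))).toReal := by
        by_contra hcon
        push_neg at hcon
        have hSK : ν S ≤ ν (⋃ y ∈ F, (S ∩ closedBall y (ε1/2))) := by
          have h0 : ν S ≤ ν (S ∩ K) := by
            have : ν S ≤ ν (S ∩ K) + ν (S ∩ Kᶜ) := by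
              refine le_trans (measure_mono ?_) (measure_union_le _ _)
              intro x hx
              by_cases hxK : x ∈ K
              · exact Or.inl ⟨hx, hxK⟩
              · exact Or.inr ⟨hx, hxK⟩
            have hz : ν (S ∩ Kᶜ) = 0 := measure_mono_null inter_subset_right hKc
            simpa [hz] using this
          refine le_trans h0 (measure_mono ?_)
          intro x hx
          obtain ⟨hxS, hxK⟩ := hx
          obtain ⟨y, hyF, hyB⟩ := by
            have := hFcov hxK
            simpa only [mem_iUnion, exists_prop] using this
          exact mem_biUnion hyF ⟨hxS, hyB⟩
        have h1 : (ν S).toReal ≤ ∑ y ∈ F, (ν (S ∩ closedBall y (ε1/2))).toReal := by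
          have h2 := le_trans hSK (measure_biUnion_finset_le _ _)
          calc (ν S).toReal ≤ (∑ y ∈ F, ν (S ∩ closedBall y (ε1/2))).toReal :=
                ENNReal.toReal_mono (by
                  refine (ENNReal.sum_lt_top.mpr (fun y _ => measure_lt_top _ _)).ne) h2
            _ = ∑ y ∈ F, (ν (S ∩ closedBall y (ε1/2))).toReal :=
                ENNReal.toReal_sum (fun y _ => measure_ne_top _ _)
        have h2 : ∑ y ∈ F, (ν (S ∩ closedBall y (ε1/2))).toReal <
            ∑ _y ∈ F, 1/(2*(N:ℝ)) :=
          Finset.sum_lt_sum_of_nonempty hFne (fun y hy => hcon y hy)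
        have h3 : ∑ _y ∈ F, 1/(2*(N:ℝ)) ≤ 1/2 := by
          rw [Finset.sum_const, nsmul_eq_mul]
          have hF : (F.card : ℝ) ≤ N := by exact_mod_cast hFcard
          calc (F.card : ℝ) * (1/(2*N)) ≤ (N:ℝ) * (1/(2*N)) :=
                mul_le_mul_of_nonneg_right hF (by positivity)
            _ = 1/2 := by field_simp
        linarith
      obtain ⟨x0, hx0F, hx0mass⟩ := hpig
      set SB := S ∩ closedBall x0 (ε1/2) with hSBdef
      have hSBmeas : MeasurableSet SB := hSmeas.inter measurableSet_closedBall
      have hx0K : x0 ∈ K := hFK hx0F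
      set γ : Finset E := insert x0 β with hγdef
      have hγne : γ.Nonempty := ⟨x0, Finset.mem_insert_self _ _⟩
      have hγcard : γ.card ≤ n := by
        rw [hγdef]
        have h1 := Finset.card_insert_le x0 β
        have h2 : β.card = α.card - 1 := hβcard
        omega
      -- key integral inequalities
      have hintα := hint α hαne
      have hintγ := hint γ hγne
      have hQle : quantErrPow ν r n ≤ ∫ x, infDist x (γ:Set E) ^ r ∂ν :=
        csInf_le hbddB ⟨γ, hγne, hγcard, rfl⟩
      have hcell : ∀ b ∈ β, ∫ x in P b, infDist x (γ:Set E) ^ r ∂ν ≤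
          (∫ x in P b, infDist x (α:Set E) ^ r ∂ν) - g0 * (ν (P b ∩ SB)).toReal := by
        intro b hbβ
        have hbα : b ∈ α := hβsubα hbβ
        have hPbmeas : MeasurableSet (P b) := hPm b hbα
        have hsplit1 : ∫ x in P b ∩ SB, infDist x (γ:Set E) ^ r ∂ν
            + ∫ x in P b \ SB, infDist x (γ:Set E) ^ r ∂ν
            = ∫ x in P b, infDist x (γ:Set E) ^ r ∂ν :=
          integral_inter_add_diff hSBmeas hintγ.integrableOn
        have hsplit2 : ∫ x in P b ∩ SB, infDist x (α:Set E) ^ r ∂ν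
            + ∫ x in P b \ SB, infDist x (α:Set E) ^ r ∂ν
            = ∫ x in P b, infDist x (α:Set E) ^ r ∂ν :=
          integral_inter_add_diff hSBmeas hintα.integrableOn
        have e1 : ∫ x in P b ∩ SB, infDist x (γ:Set E) ^ r ∂ν ≤
            (ε1/2)^r * (ν (P b ∩ SB)).toReal := by
          have hb1 : ∀ x ∈ P b ∩ SB, infDist x (γ:Set E) ^ r ≤ (ε1/2)^r := by
            intro x hx
            have hxB : dist x x0 ≤ ε1/2 := by
              have := hx.2.2
              simpa [mem_closedBall] using this
            have h5 : infDist x (γ:Set E) ≤ dist x x0 :=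
              infDist_le_dist_of_mem (by simp [hγdef])
            exact Real.rpow_le_rpow infDist_nonneg (le_trans h5 hxB) hr.le
          calc ∫ x in P b ∩ SB, infDist x (γ:Set E) ^ r ∂ν
              ≤ ∫ _x in P b ∩ SB, (ε1/2)^r ∂ν :=
                setIntegral_mono_on (hintγ.integrableOn.mono_set inter_subset_left)
                  (integrableOn_const (measure_ne_top _ _))
                  (hPbmeas.inter hSBmeas) hb1
            _ = (ε1/2)^r * (ν (P b ∩ SB)).toReal := by
                rw [setIntegral_const, smul_eq_mul, mul_comm]; rfl
        have e1' : ε1^r * (ν (P b ∩ SB)).toReal ≤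
            ∫ x in P b ∩ SB, infDist x (α:Set E) ^ r ∂ν := by
          refine setIntegral_ge_of_const_le_real (hPbmeas.inter hSBmeas) (measure_ne_top _ _) ?_
            (hintα.integrableOn.mono_set inter_subset_left)
          intro x hx
          have hxS : ε1 < infDist x (β:Set E) := hx.2.1
          have hbd : infDist x (β:Set E) ≤ dist x b :=
            infDist_le_dist_of_mem (Finset.mem_coe.mpr hbβ)
          have hda : dist x b = infDist x (α:Set E) := hP5 b hbα hx.1
          have : ε1 ≤ infDist x (α:Set E) := by rw [← hda]; linarith
          exact Real.rpow_le_rpow hε1pos.le this hr.le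
        have e2 : ∫ x in P b \ SB, infDist x (γ:Set E) ^ r ∂ν ≤
            ∫ x in P b \ SB, infDist x (α:Set E) ^ r ∂ν := by
          refine setIntegral_mono_on (hintγ.integrableOn.mono_set diff_subset)
            (hintα.integrableOn.mono_set diff_subset) (hPbmeas.diff hSBmeas) ?_
          intro x hx
          have h5 : infDist x (γ:Set E) ≤ dist x b :=
            infDist_le_dist_of_mem (by simp [hγdef, Finset.mem_coe.mpr hbβ])
          have hda : dist x b = infDist x (α:Set E) := hP5 b hbα hx.1
          exact Real.rpow_le_rpow infDist_nonneg (by rw [← hda]; exact h5) hr.le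
        have hm0 : 0 ≤ (ν (P b ∩ SB)).toReal := ENNReal.toReal_nonneg
        have hg0eq : (ε1/2)^r = ε1^r - g0 := by rw [hg0def]; ring
        have hexp : (ε1/2)^r * (ν (P b ∩ SB)).toReal
            = ε1^r * (ν (P b ∩ SB)).toReal - g0 * (ν (P b ∩ SB)).toReal := by
          rw [hg0eq]; ring
        clear_value ε1 g0 p0 ε2 K β S SB γ
        linarith [e1, e1', e2, hsplit1, hsplit2]
      have hcella : ∫ x in P a, infDist x (γ:Set E) ^ r ∂ν ≤ (ν (P a)).toReal := by
        have hae : ∀ᵐ x ∂ν, x ∈ P a → infDist x (γ:Set E) ^ r ≤ 1 := by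
          filter_upwards [haeK] with x hxK _
          have h5 : infDist x (γ:Set E) ≤ dist x x0 :=
            infDist_le_dist_of_mem (by simp [hγdef])
          have h6 : dist x x0 ≤ 1 := hdist1 x hxK x0 hx0K
          exact Real.rpow_le_one infDist_nonneg (le_trans h5 h6) hr.le
        calc ∫ x in P a, infDist x (γ:Set E) ^ r ∂ν ≤ ∫ _x in P a, (1:ℝ) ∂ν :=
              setIntegral_mono_on_ae hintγ.integrableOn
                (integrableOn_const (measure_ne_top _ _)) hPa_meas hae
          _ = (ν (P a)).toReal := by rw [setIntegral_const, smul_eq_mul, mul_one]; rfl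
      -- assemble
      have hsum_eq : quantErrPow ν r n =
          (∑ b ∈ β, ∫ x in P b, infDist x (α:Set E) ^ r ∂ν) + voronoiI ν r α P a := by
        rw [← hopte, hsplit α hαne]
        exact (Finset.sum_erase_add α _ ha).symm
      have hsum_leγ : ∫ x, infDist x (γ:Set E) ^ r ∂ν =
          (∑ b ∈ β, ∫ x in P b, infDist x (γ:Set E) ^ r ∂ν)
            + ∫ x in P a, infDist x (γ:Set E) ^ r ∂ν := by
        rw [hsplit γ hγne]
        exact (Finset.sum_erase_add α _ ha).symm
      have hsumcell : ∑ b ∈ β, ∫ x in P b, infDist x (γ:Set E) ^ r ∂ν ≤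
          (∑ b ∈ β, ∫ x in P b, infDist x (α:Set E) ^ r ∂ν)
            - g0 * ∑ b ∈ β, (ν (P b ∩ SB)).toReal := by
        rw [Finset.mul_sum, ← Finset.sum_sub_distrib]
        exact Finset.sum_le_sum hcell
      -- relate ∑ ν (P b ∩ SB) to ν SB
      have hT : (ν SB).toReal - (ν (P a)).toReal ≤ ∑ b ∈ β, (ν (P b ∩ SB)).toReal := by
        have hU : SB \ P a ⊆ ⋃ b ∈ β, (P b ∩ SB) := by
          intro x hx
          have hxu : x ∈ ⋃ b ∈ α, P b := hPu ▸ mem_univ x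
          simp only [mem_iUnion, exists_prop] at hxu
          obtain ⟨b, hbα, hbP⟩ := hxu
          have hba : b ≠ a := fun h => hx.2 (h ▸ hbP)
          simp only [mem_iUnion, exists_prop]
          exact ⟨b, Finset.mem_erase.mpr ⟨hba, hbα⟩, hbP, hx.1⟩
        have h1 : ν (SB \ P a) ≤ ∑ b ∈ β, ν (P b ∩ SB) :=
          le_trans (measure_mono hU) (measure_biUnion_finset_le _ _)
        have h1' : (ν (SB \ P a)).toReal ≤ ∑ b ∈ β, (ν (P b ∩ SB)).toReal := by
          calc (ν (SB \ P a)).toReal ≤ (∑ b ∈ β, ν (P b ∩ SB)).toReal :=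
                ENNReal.toReal_mono
                  (ENNReal.sum_lt_top.mpr (fun b _ => measure_lt_top _ _)).ne h1
            _ = ∑ b ∈ β, (ν (P b ∩ SB)).toReal :=
                ENNReal.toReal_sum (fun b _ => measure_ne_top _ _)
        have h2 : ν SB ≤ ν (SB \ P a) + ν (P a) := by
          refine le_trans (measure_mono ?_) (measure_union_le _ _)
          intro x hx
          by_cases hxP : x ∈ P a
          · exact Or.inr hxP
          · exact Or.inl ⟨hx, hxP⟩
        have h2' : (ν SB).toReal ≤ (ν (SB \ P a)).toReal + (ν (P a)).toReal := by
          calc (ν SB).toReal ≤ (ν (SB \ P a) + ν (P a)).toReal :=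
                ENNReal.toReal_mono
                  (ENNReal.add_ne_top.mpr ⟨measure_ne_top _ _, measure_ne_top _ _⟩) h2
            _ = _ := ENNReal.toReal_add (measure_ne_top _ _) (measure_ne_top _ _)
        linarith
      -- final arithmetic for Step A
      have hmain : g0 * (∑ b ∈ β, (ν (P b ∩ SB)).toReal) + voronoiI ν r α P a ≤
          (ν (P a)).toReal := by
        have hstep : ∫ x, infDist x (γ:Set E) ^ r ∂ν ≤
            ((∑ b ∈ β, ∫ x in P b, infDist x (α:Set E) ^ r ∂ν)
              - g0 * ∑ b ∈ β, (ν (P b ∩ SB)).toReal) + (ν (P a)).toReal := by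
          rw [hsum_leγ]
          exact add_le_add hsumcell hcella
        have hcomb := le_trans hQle hstep
        rw [hsum_eq] at hcomb
        linarith
      have hTnn : 0 ≤ ∑ b ∈ β, (ν (P b ∩ SB)).toReal :=
        Finset.sum_nonneg (fun b _ => ENNReal.toReal_nonneg)
      have hX0 : (0:ℝ) ≤ (ν (P a)).toReal := ENNReal.toReal_nonneg
      have hkey : g0 * (1/(2*N)) ≤ (1+g0) * (ν (P a)).toReal := by
        have e1 : g0 * ((ν SB).toReal - (ν (P a)).toReal)
            = g0 * (ν SB).toReal - g0 * (ν (P a)).toReal := by ring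
        have e2 : (1+g0) * (ν (P a)).toReal
            = (ν (P a)).toReal + g0 * (ν (P a)).toReal := by ring
        clear_value ε1 g0 p0 ε2 K β S SB γ
        linarith [mul_le_mul_of_nonneg_left hT hg0pos.le,
          mul_le_mul_of_nonneg_left hx0mass hg0pos.le, hmain, hIa_nonneg, hTnn, hX0]
      rw [hp0def, div_le_iff₀ (by positivity)]
      have h6 : g0 = (2*(N:ℝ)) * (g0 * (1/(2*N))) := by field_simp
      calc g0 = (2*(N:ℝ)) * (g0 * (1/(2*N))) := h6
        _ ≤ (2*(N:ℝ)) * ((1+g0) * (ν (P a)).toReal) :=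
            mul_le_mul_of_nonneg_left hkey (by positivity)
        _ = (ν (P a)).toReal * (2*↑N*(1+g0)) := by ring
  -- STEP B : lower bound on the local error from the mass bound
  have hie : IntegrableOn (fun x => infDist x (α:Set E) ^ r) (P a) ν :=
    (hint α hαne).integrableOn
  set D := P a \ closedBall a ε2 with hDdef
  have hDmeas : MeasurableSet D := hPa_meas.diff measurableSet_closedBall
  have h1 : ε2 ^ r * (ν D).toReal ≤ ∫ x in D, infDist x (α:Set E) ^ r ∂ν := by
    refine setIntegral_ge_of_const_le_real hDmeas (measure_ne_top _ _) ?_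
      (hie.mono_set diff_subset)
    intro x hx
    have hda : dist x a = infDist x (α:Set E) := hP5 a ha hx.1
    have hfar : ε2 < dist x a := by
      have := hx.2
      simpa [mem_closedBall, not_le] using this
    rw [← hda]
    exact Real.rpow_le_rpow hε2pos.le hfar.le hr.le
  have h2 : ∫ x in D, infDist x (α:Set E) ^ r ∂ν ≤ voronoiI ν r α P a := by
    refine setIntegral_mono_set hie ?_ (HasSubset.Subset.eventuallyLE diff_subset)
    exact Filter.Eventually.of_forall (fun x => hnonneg α x)
  have h3 : p0/2 ≤ (ν D).toReal := by
    have hcb : (ν (closedBall a ε2)).toReal ≤ C * ε2^t := by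
      calc (ν (closedBall a ε2)).toReal ≤ (ENNReal.ofReal (C * ε2^t)).toReal :=
            ENNReal.toReal_mono ENNReal.ofReal_ne_top (hup a ε2 hε2pos)
        _ = C * ε2^t := ENNReal.toReal_ofReal (by positivity)
    have hsub : P a ⊆ D ∪ closedBall a ε2 := by
      intro x hx
      by_cases hxc : x ∈ closedBall a ε2
      · exact Or.inr hxc
      · exact Or.inl ⟨hx, hxc⟩
    have h4 : (ν (P a)).toReal ≤ (ν D).toReal + (ν (closedBall a ε2)).toReal := by
      calc (ν (P a)).toReal ≤ (ν D + ν (closedBall a ε2)).toReal :=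
            ENNReal.toReal_mono
              (ENNReal.add_ne_top.mpr ⟨measure_ne_top _ _, measure_ne_top _ _⟩)
              (le_trans (measure_mono hsub) (measure_union_le _ _))
        _ = _ := ENNReal.toReal_add (measure_ne_top _ _) (measure_ne_top _ _)
    linarith
  have hfin : ε2 ^ r * (p0/2) ≤ voronoiI ν r α P a := by
    calc ε2 ^ r * (p0/2) ≤ ε2 ^ r * (ν D).toReal :=
          mul_le_mul_of_nonneg_left h3 hε2r.le
      _ ≤ ∫ x in D, infDist x (α:Set E) ^ r ∂ν := h1
      _ ≤ voronoiI ν r α P a := h2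
  have : ε2 ^ r * p0 / 4 < ε2 ^ r * (p0/2) := by nlinarith
  linarith
end

section
/- Let C, t > 0 and let n ≥ 2 be an integer. There exists a constant c_n > 0, depending only on C, t, n, r and q, such that for every Borel probability measure ν on ℝ^q whose support is compact of diameter at most 1 and which satisfies ν(B(x,ε)) ≤ C·ε^t for all x ∈ ℝ^q and all ε > 0, every n-optimal set α_n ∈ C_{n,r}(ν), and every Voronoi partition (P_a(α_n))_{a∈α_n}: ν(P_a(α_n)) ≥ c_n for every a ∈ α_n. -/
open MeasureTheory Metric Set

open scoped ENNReal NNReal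

set_option linter.unusedSectionVars false
set_option linter.unusedVariables false

section aux
variable {E : Type*} [NormedAddCommGroup E] [NormedSpace ℝ E]
  [MeasurableSpace E] [BorelSpace E] [FiniteDimensional ℝ E]

lemma aux_msupp_compl (ν : Measure E) : ν (msupp ν)ᶜ = 0 := by
  apply measure_null_of_locally_null
  intro x hx
  simp only [msupp, Set.mem_compl_iff, Set.mem_setOf_eq, not_forall] at hx
  obtain ⟨ε, hε, h0⟩ := hx
  exact ⟨ball x ε, mem_nhdsWithin_of_mem_nhds (ball_mem_nhds x hε),
    le_antisymm (not_lt.mp h0) zero_le⟩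

lemma aux_ae_msupp (ν : Measure E) : ∀ᵐ x ∂ν, x ∈ msupp ν :=
  ae_iff.mpr (aux_msupp_compl ν)

lemma aux_cont (s : Set E) (r : ℝ) (hr : 0 < r) :
    Continuous (fun x => infDist x s ^ r) :=
  (continuous_infDist_pt s).rpow_const (fun _ => Or.inr hr.le)

lemma aux_fnonneg (s : Set E) (r : ℝ) (x : E) : 0 ≤ infDist x s ^ r :=
  Real.rpow_nonneg infDist_nonneg _

lemma aux_integrable (ν : Measure E) [IsProbabilityMeasure ν]
    (hb : Bornology.IsBounded (msupp ν)) (hd : diam (msupp ν) ≤ 1)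
    (r : ℝ) (hr : 0 < r) (s : Set E) (b0 : E) (hb0 : b0 ∈ s) (x0 : E) (hx0 : x0 ∈ msupp ν) :
    Integrable (fun x => infDist x s ^ r) ν := by
  refine Integrable.mono' (integrable_const ((1 + dist x0 b0) ^ r : ℝ))
    ((aux_cont s r hr).aestronglyMeasurable) ?_
  filter_upwards [aux_ae_msupp ν] with x hx
  rw [Real.norm_of_nonneg (aux_fnonneg s r x)]
  apply Real.rpow_le_rpow infDist_nonneg ?_ hr.le
  calc infDist x s ≤ dist x b0 := infDist_le_dist_of_mem hb0
    _ ≤ dist x x0 + dist x0 b0 := dist_triangle _ _ _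
    _ ≤ 1 + dist x0 b0 := by
        have h := dist_le_diam_of_mem hb hx hx0
        linarith [h.trans hd]

lemma aux_select (ν : Measure E) [IsProbabilityMeasure ν]
    (hb : Bornology.IsBounded (msupp ν)) (hd : diam (msupp ν) ≤ 1)
    (C t : ℝ) (hC : 0 < C) (ht : 0 < t)
    (hball : ∀ x : E, ∀ ε : ℝ, 0 < ε → ν (closedBall x ε) ≤ ENNReal.ofReal (C * ε ^ t))
    (n : ℕ) (ε : ℝ) (hε : 0 < ε) (hεn : (n : ℝ) * (C * ε ^ t) ≤ 1/4)
    (T : Finset E) (hT : closedBall (0:E) 1 ⊆ ⋃ y ∈ T, ball y (ε/16))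
    (x0 : E) (hx0 : x0 ∈ msupp ν)
    (γ : Finset E) (hγ : γ.Nonempty) (hγn : γ.card ≤ n) :
    ∃ z ∈ msupp ν, ε < infDist z (γ : Set E) ∧
      ENNReal.ofReal (1/(2 * (T.card : ℝ))) ≤ ν (ball z (ε/8)) := by
  have hTne : T.Nonempty := by
    have h0 : (0:E) ∈ ⋃ y ∈ T, ball y (ε/16) := hT (mem_closedBall_self zero_le_one)
    obtain ⟨y, hy, -⟩ := mem_iUnion₂.mp h0
    exact ⟨y, hy⟩
  have hTcard : (1:ℝ) ≤ (T.card : ℝ) := by exact_mod_cast Finset.card_pos.mpr hTne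
  set S := {x : E | ε < infDist x (γ : Set E)} with hSdef
  have hScompl : ν Sᶜ ≤ ENNReal.ofReal (1/4) := by
    have hsub : Sᶜ ⊆ ⋃ b ∈ γ, closedBall b ε := by
      intro x hx
      simp only [hSdef, mem_compl_iff, mem_setOf_eq, not_lt] at hx
      obtain ⟨b, hbγ, hbeq⟩ := (γ.finite_toSet.isCompact).exists_infDist_eq_dist
        (by exact_mod_cast hγ) x
      exact mem_biUnion (by exact_mod_cast hbγ) (by rw [mem_closedBall, ← hbeq]; exact hx)
    calc ν Sᶜ ≤ ∑ b ∈ γ, ν (closedBall b ε) :=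
          (measure_mono hsub).trans (measure_biUnion_finset_le _ _)
      _ ≤ ∑ _b ∈ γ, ENNReal.ofReal (C * ε ^ t) :=
          Finset.sum_le_sum fun b _ => hball b ε hε
      _ = (γ.card : ℝ≥0∞) * ENNReal.ofReal (C * ε ^ t) := by
          rw [Finset.sum_const, nsmul_eq_mul]
      _ ≤ (n : ℝ≥0∞) * ENNReal.ofReal (C * ε ^ t) := by
          exact mul_le_mul_left (by exact_mod_cast hγn) _
      _ = ENNReal.ofReal ((n : ℝ) * (C * ε ^ t)) := by
          rw [← ENNReal.ofReal_natCast, ← ENNReal.ofReal_mul (by positivity)]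
      _ ≤ ENNReal.ofReal (1/4) := ENNReal.ofReal_le_ofReal hεn
  have hS34 : ENNReal.ofReal (3/4) ≤ ν S := by
    by_contra hcon
    push_neg at hcon
    have h1 : (1 : ℝ≥0∞) ≤ ν S + ν Sᶜ := by
      have := measure_union_le (μ := ν) S Sᶜ
      rwa [union_compl_self, measure_univ] at this
    have h2 : ν S + ν Sᶜ < ENNReal.ofReal (3/4) + ENNReal.ofReal (1/4) :=
      ENNReal.add_lt_add_of_lt_of_le (by finiteness) hcon hScompl
    rw [← ENNReal.ofReal_add (by norm_num) (by norm_num)] at h2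
    norm_num at h2
    exact absurd (h1.trans_lt h2) (by simp)
  have hcov : S ∩ msupp ν ⊆ ⋃ y ∈ T, (ball (x0 + y) (ε/16) ∩ S) := by
    rintro x ⟨hxS, hxm⟩
    have hx1 : x - x0 ∈ closedBall (0:E) 1 := by
      rw [mem_closedBall, dist_zero_right]
      calc ‖x - x0‖ = dist x x0 := (dist_eq_norm x x0).symm
        _ ≤ diam (msupp ν) := dist_le_diam_of_mem hb hxm hx0
        _ ≤ 1 := hd
    obtain ⟨y, hyT, hy⟩ := mem_iUnion₂.mp (hT hx1)
    refine mem_biUnion hyT ⟨?_, hxS⟩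
    rw [mem_ball] at hy ⊢
    rw [dist_eq_norm] at hy ⊢
    simpa [sub_sub] using hy
  have hexist : ∃ y ∈ T, ENNReal.ofReal (1/(2 * (T.card : ℝ))) ≤ ν (ball (x0 + y) (ε/16) ∩ S) := by
    by_contra hcon
    push_neg at hcon
    have hsum : ν (S ∩ msupp ν) ≤ ∑ y ∈ T, ν (ball (x0 + y) (ε/16) ∩ S) :=
      (measure_mono hcov).trans (measure_biUnion_finset_le _ _)
    have hb2 : ∑ y ∈ T, ν (ball (x0 + y) (ε/16) ∩ S)
        ≤ (T.card : ℝ≥0∞) * ENNReal.ofReal (1/(2 * (T.card : ℝ))) := by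
      calc ∑ y ∈ T, ν (ball (x0 + y) (ε/16) ∩ S)
          ≤ ∑ _y ∈ T, ENNReal.ofReal (1/(2 * (T.card : ℝ))) :=
            Finset.sum_le_sum fun y hy => (hcon y hy).le
        _ = (T.card : ℝ≥0∞) * ENNReal.ofReal (1/(2 * (T.card : ℝ))) := by
            rw [Finset.sum_const, nsmul_eq_mul]
    have hhalf : (T.card : ℝ≥0∞) * ENNReal.ofReal (1/(2 * (T.card : ℝ)))
        = ENNReal.ofReal (1/2) := by
      rw [← ENNReal.ofReal_natCast, ← ENNReal.ofReal_mul (by positivity)]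
      congr 1
      field_simp
    have hSm : ν S ≤ ν (S ∩ msupp ν) := by
      have h : ν S ≤ ν (S ∩ msupp ν) + ν ((msupp ν)ᶜ) := by
        refine (measure_mono ?_).trans (measure_union_le _ _)
        intro x hx
        by_cases hxm : x ∈ msupp ν
        · exact Or.inl ⟨hx, hxm⟩
        · exact Or.inr hxm
      rwa [aux_msupp_compl, add_zero] at h
    have hfin : ENNReal.ofReal (3/4) ≤ ENNReal.ofReal (1/2) :=
      hS34.trans (hSm.trans (hsum.trans (hb2.trans_eq hhalf)))
    rw [ENNReal.ofReal_le_ofReal_iff (by norm_num)] at hfin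
    linarith
  obtain ⟨y, hyT, hy⟩ := hexist
  have hpos : ν (ball (x0 + y) (ε/16) ∩ S ∩ msupp ν) ≠ 0 := by
    intro h0
    have h : ν (ball (x0 + y) (ε/16) ∩ S)
        ≤ ν (ball (x0 + y) (ε/16) ∩ S ∩ msupp ν) + ν ((msupp ν)ᶜ) := by
      refine (measure_mono ?_).trans (measure_union_le _ _)
      intro x hx
      by_cases hxm : x ∈ msupp ν
      · exact Or.inl ⟨hx, hxm⟩
      · exact Or.inr hxm
    rw [h0, aux_msupp_compl, add_zero, le_zero_iff] at h
    rw [h] at hy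
    simp only [nonpos_iff_eq_zero, ENNReal.ofReal_eq_zero] at hy
    have : (0:ℝ) < 1/(2 * (T.card : ℝ)) := by positivity
    linarith
  obtain ⟨z, hz⟩ := nonempty_of_measure_ne_zero hpos
  obtain ⟨⟨hzball, hzS⟩, hzm⟩ := hz
  refine ⟨z, hzm, hzS, ?_⟩
  refine hy.trans (measure_mono ?_)
  rintro x ⟨hx, -⟩
  rw [mem_ball] at hx hzball ⊢
  calc dist x z ≤ dist x (x0 + y) + dist (x0 + y) z := dist_triangle _ _ _
    _ < ε/16 + ε/16 := by rw [dist_comm (x0+y) z]; exact add_lt_add hx hzball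
    _ = ε/8 := by ring

lemma aux_gain (ν : Measure E) [IsProbabilityMeasure ν]
    (z : E) (ε : ℝ) (hε : 0 < ε) (μ0 : ℝ) (hμ0' : 0 ≤ μ0)
    (hμ0 : ENNReal.ofReal μ0 ≤ ν (ball z (ε/8)))
    (g0 : ℝ) (hg0 : 0 ≤ g0)
    (f g : E → ℝ) (hf_int : Integrable f ν) (hg_int : Integrable g ν)
    (h_ae : ∀ᵐ x ∂ν, f x ≤ g x)
    (h_ball : ∀ x ∈ ball z (ε/8), g0 ≤ g x - f x) :
    ∫ x, f x ∂ν ≤ ∫ x, g x ∂ν - g0 * μ0 := by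
  have hint : Integrable (fun x => g x - f x) ν := hg_int.sub hf_int
  have h1 : g0 * (ν (ball z (ε/8))).toReal ≤ ∫ x in ball z (ε/8), (g x - f x) ∂ν :=
    setIntegral_ge_of_const_le_real measurableSet_ball (measure_ne_top ν _) h_ball
      hint.integrableOn
  have h2 : ∫ x in ball z (ε/8), (g x - f x) ∂ν ≤ ∫ x, (g x - f x) ∂ν :=
    setIntegral_le_integral hint (h_ae.mono fun x hx => by simpa using sub_nonneg.mpr hx)
  have h3 : μ0 ≤ (ν (ball z (ε/8))).toReal := by
    have h := ENNReal.toReal_mono (measure_ne_top ν _) hμ0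
    rwa [ENNReal.toReal_ofReal hμ0'] at h
  have h4 : g0 * μ0 ≤ g0 * (ν (ball z (ε/8))).toReal :=
    mul_le_mul_of_nonneg_left h3 hg0
  have h5 : ∫ x, (g x - f x) ∂ν = ∫ x, g x ∂ν - ∫ x, f x ∂ν := integral_sub hg_int hf_int
  linarith

end aux

/-- For `C, t > 0` and an integer `n ≥ 2` there is `c_n > 0` (depending only on
`C, t, n, r` and the space) such that for every Borel probability measure `ν` with compact
support of diameter at most `1` satisfying `ν(B(x,ε)) ≤ C·ε^t`, every `n`-optimal set `α` and
every Voronoi partition `P`: `ν(P_a(α)) ≥ c_n` for every `a ∈ α`. -/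
theorem stmt8 {E : Type*} [NormedAddCommGroup E] [NormedSpace ℝ E]
    [MeasurableSpace E] [BorelSpace E] [FiniteDimensional ℝ E]
    (r : ℝ) (hr : 0 < r)
    (C t : ℝ) (hC : 0 < C) (ht : 0 < t) (n : ℕ) (hn : 2 ≤ n) :
    ∃ c : ℝ, 0 < c ∧
      ∀ ν : MeasureTheory.Measure E, MeasureTheory.IsProbabilityMeasure ν →
        IsCompact (msupp ν) → Metric.diam (msupp ν) ≤ 1 →
        (∀ x : E, ∀ ε : ℝ, 0 < ε →
          ν (Metric.closedBall x ε) ≤ ENNReal.ofReal (C * ε ^ t)) →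
        ∀ α : Finset E, IsOptimalSet ν r n α →
          ∀ P : E → Set E, IsVoronoiPartition α P →
            ∀ a ∈ α, ENNReal.ofReal c ≤ ν (P a) := by
  classical
  have hnpos : (0:ℝ) < (n:ℝ) := by
    have : (2:ℝ) ≤ (n:ℝ) := by exact_mod_cast hn
    linarith
  -- constants
  set ε : ℝ := min 1 ((4 * (n:ℝ) * C)⁻¹ ^ t⁻¹) with hεdef
  have hinvpos : (0:ℝ) < (4 * (n:ℝ) * C)⁻¹ := by positivity
  have hε : 0 < ε := lt_min one_pos (Real.rpow_pos_of_pos hinvpos _)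
  have hε1 : ε ≤ 1 := min_le_left _ _
  have hεn : (n:ℝ) * (C * ε ^ t) ≤ 1/4 := by
    have h1 : ε ^ t ≤ ((4*(n:ℝ)*C)⁻¹ ^ t⁻¹) ^ t :=
      Real.rpow_le_rpow hε.le (min_le_right _ _) ht.le
    rw [← Real.rpow_mul hinvpos.le, inv_mul_cancel₀ ht.ne', Real.rpow_one] at h1
    calc (n:ℝ) * (C * ε ^ t) ≤ (n:ℝ) * (C * (4*(n:ℝ)*C)⁻¹) := by
          exact mul_le_mul_of_nonneg_left (mul_le_mul_of_nonneg_left h1 hC.le) (by positivity)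
      _ = 1/4 := by field_simp
  obtain ⟨T, hT⟩ := (isCompact_closedBall (0:E) 1).elim_finite_subcover
      (fun y : E => ball y (ε/16)) (fun y => isOpen_ball)
      (fun x _ => mem_iUnion.mpr ⟨x, mem_ball_self (by positivity)⟩)
  have hTne : T.Nonempty := by
    obtain ⟨y, hy, -⟩ := mem_iUnion₂.mp (hT (mem_closedBall_self zero_le_one))
    exact ⟨y, hy⟩
  have hTcard : (1:ℝ) ≤ (T.card:ℝ) := by exact_mod_cast Finset.card_pos.mpr hTne
  set μ0 : ℝ := 1/(2 * (T.card:ℝ)) with hμ0def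
  have hμ0 : 0 < μ0 := by positivity
  set g0 : ℝ := (7*ε/8) ^ r - (ε/8) ^ r with hg0def
  have hg0 : 0 < g0 := by
    have h := Real.rpow_lt_rpow (by positivity : (0:ℝ) ≤ ε/8) (by linarith : ε/8 < 7*ε/8) hr
    simp only [hg0def]
    linarith
  set Δ : ℝ := g0 * μ0 with hΔdef
  have hΔ : 0 < Δ := mul_pos hg0 hμ0
  have h4r : (0:ℝ) < 4 ^ r := Real.rpow_pos_of_pos (by norm_num) r
  refine ⟨min (Δ / 4 ^ r) 1, lt_min (by positivity) one_pos, ?_⟩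
  intro ν hprob hcomp hdiam hball α hopt P hvor a ha
  haveI := hprob
  obtain ⟨hαne, hαcard, hαopt⟩ := hopt
  obtain ⟨hPmeas, hPunion, hPdisj, hPlt, hPeq⟩ := hvor
  have hbdd := hcomp.isBounded
  obtain ⟨x0, hx0⟩ : (msupp ν).Nonempty := by
    apply nonempty_of_measure_ne_zero (μ := ν)
    intro h0
    have h1 : (1 : ℝ≥0∞) ≤ ν (msupp ν) + ν (msupp ν)ᶜ := by
      have h := measure_union_le (μ := ν) (msupp ν) (msupp ν)ᶜ
      rwa [union_compl_self, measure_univ] at h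
    rw [h0, aux_msupp_compl, add_zero] at h1
    simp at h1
  have hint : ∀ γ : Finset E, γ.Nonempty →
      Integrable (fun x => infDist x (γ:Set E) ^ r) ν := by
    intro γ hγ
    obtain ⟨b0, hb0⟩ := hγ
    exact aux_integrable ν hbdd hdiam r hr _ b0 (by exact_mod_cast hb0) x0 hx0
  have hQle : ∀ γ : Finset E, γ.Nonempty → γ.card ≤ n →
      quantErrPow ν r n ≤ ∫ x, infDist x (γ:Set E) ^ r ∂ν := by
    intro γ hγ hγc
    apply csInf_le
    · refine ⟨0, fun I hI => ?_⟩
      obtain ⟨γ', h1, h2, rfl⟩ := hI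
      exact integral_nonneg fun x => aux_fnonneg _ _ _
    · exact ⟨γ, hγ, hγc, rfl⟩
  set V : ℝ := ∫ x, infDist x (α:Set E) ^ r ∂ν with hVdef
  have hsel : ∀ γ : Finset E, γ.Nonempty → γ.card ≤ n →
      ∃ z ∈ msupp ν, ε < infDist z (γ : Set E) ∧
        ENNReal.ofReal μ0 ≤ ν (ball z (ε/8)) := by
    intro γ hγ hγc
    have h := aux_select ν hbdd hdiam C t hC ht hball n ε hε hεn T hT x0 hx0 γ hγ hγc
    simpa [hμ0def] using h
  have hstep : ∀ γ : Finset E, γ.Nonempty → γ.card + 1 ≤ n →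
      V + Δ ≤ ∫ x, infDist x (γ:Set E) ^ r ∂ν := by
    intro γ hγ hγc
    obtain ⟨z, hzm, hzd, hzb⟩ := hsel γ hγ (le_trans (Nat.le_succ _) hγc)
    have hγ' : (insert z γ).Nonempty := ⟨z, Finset.mem_insert_self _ _⟩
    have hγ'c : (insert z γ).card ≤ n := le_trans (Finset.card_insert_le _ _) hγc
    have hgain : ∫ x, infDist x ((insert z γ : Finset E):Set E) ^ r ∂ν
        ≤ ∫ x, infDist x (γ:Set E) ^ r ∂ν - g0 * μ0 := by
      apply aux_gain ν z ε hε μ0 hμ0.le hzb g0 hg0.le _ _ (hint _ hγ') (hint _ hγ)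
      · apply Filter.Eventually.of_forall
        intro x
        apply Real.rpow_le_rpow infDist_nonneg ?_ hr.le
        apply infDist_le_infDist_of_subset ?_ (by exact_mod_cast hγ)
        intro w hw
        simp only [Finset.coe_insert, Set.mem_insert_iff]
        exact Or.inr hw
      · intro x hx
        rw [mem_ball] at hx
        have hfx : infDist x ((insert z γ:Finset E):Set E) ^ r ≤ (ε/8) ^ r := by
          apply Real.rpow_le_rpow infDist_nonneg ?_ hr.le
          refine le_trans (infDist_le_dist_of_mem ?_) hx.le
          simp
        have hgx : (7*ε/8) ^ r ≤ infDist x (γ:Set E) ^ r := by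
          apply Real.rpow_le_rpow (by positivity) ?_ hr.le
          have h1 : infDist z (γ:Set E) ≤ infDist x (γ:Set E) + dist z x :=
            infDist_le_infDist_add_dist
          rw [dist_comm] at h1
          linarith
        simp only [hg0def]
        linarith
    have hV := hQle (insert z γ) hγ' hγ'c
    rw [← hαopt] at hV
    linarith
  rcases eq_or_lt_of_le (Finset.one_le_card.mpr hαne) with hcard1 | hcard2
  · -- card α = 1
    obtain ⟨b, hb⟩ := Finset.card_eq_one.mp hcard1.symm
    have hab : a = b := by rw [hb] at ha; simpa using ha
    have hPa : P a = univ := by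
      rw [← hPunion, hb, ← hab]
      simp
    rw [hPa, measure_univ]
    exact ENNReal.ofReal_le_one.mpr (min_le_right _ _)
  · set β : Finset E := α.erase a with hβdef
    have hβne : β.Nonempty := by
      rw [← Finset.card_pos, hβdef, Finset.card_erase_of_mem ha]
      omega
    have hβc : β.card + 1 ≤ n := by
      rw [hβdef, Finset.card_erase_of_mem ha]
      omega
    by_cases hdist : infDist x0 (β:Set E) ≤ 3
    · -- main case: some other point of α is near the support
      have hsplit := integral_add_compl (hPmeas a ha) (hint β hβne)
      have h2 : ∫ x in (P a)ᶜ, infDist x (β:Set E) ^ r ∂ν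
          ≤ ∫ x in (P a)ᶜ, infDist x (α:Set E) ^ r ∂ν := by
        apply setIntegral_mono_on (hint β hβne).integrableOn (hint α hαne).integrableOn
          (hPmeas a ha).compl
        intro x hx
        have hxuniv : x ∈ ⋃ b ∈ α, P b := hPunion ▸ mem_univ x
        obtain ⟨b, hbα, hxb⟩ := mem_iUnion₂.mp hxuniv
        have hba : b ≠ a := by rintro rfl; exact hx hxb
        have heq : dist x b = infDist x (α:Set E) := hPeq b hbα hxb
        apply Real.rpow_le_rpow infDist_nonneg ?_ hr.le
        rw [← heq]
        apply infDist_le_dist_of_mem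
        simp only [hβdef, Finset.coe_erase, Set.mem_diff, Set.mem_singleton_iff]
        exact ⟨by exact_mod_cast hbα, hba⟩
      have h3 : ∫ x in (P a)ᶜ, infDist x (α:Set E) ^ r ∂ν ≤ V := by
        have hsplitα := integral_add_compl (hPmeas a ha) (hint α hαne)
        have hnn : 0 ≤ ∫ x in P a, infDist x (α:Set E) ^ r ∂ν :=
          setIntegral_nonneg (hPmeas a ha) fun x _ => aux_fnonneg _ _ _
        simp only [hVdef]
        linarith
      have h4 : ∫ x in P a, infDist x (β:Set E) ^ r ∂ν ≤ 4 ^ r * (ν (P a)).toReal := by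
        have hb4 : ∀ᵐ x ∂ν, x ∈ P a → infDist x (β:Set E) ^ r ≤ 4 ^ r := by
          filter_upwards [aux_ae_msupp ν] with x hx _
          apply Real.rpow_le_rpow infDist_nonneg ?_ hr.le
          have h1 : infDist x (β:Set E) ≤ infDist x0 (β:Set E) + dist x x0 :=
            infDist_le_infDist_add_dist
          have h2 : dist x x0 ≤ 1 := (dist_le_diam_of_mem hbdd hx hx0).trans hdiam
          linarith
        calc ∫ x in P a, infDist x (β:Set E) ^ r ∂ν
            ≤ ∫ _x in P a, (4:ℝ) ^ r ∂ν := by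
              apply integral_mono_ae (hint β hβne).integrableOn (integrable_const _)
              exact (ae_restrict_iff' (hPmeas a ha)).mpr hb4
          _ = (ν (P a)).toReal * 4 ^ r := by rw [setIntegral_const, smul_eq_mul]; rfl
          _ = 4 ^ r * (ν (P a)).toReal := mul_comm _ _
      have h5 : V + Δ ≤ ∫ x, infDist x (β:Set E) ^ r ∂ν := hstep β hβne hβc
      have h7 : min (Δ / 4^r) 1 ≤ (ν (P a)).toReal := by
        refine le_trans (min_le_left _ _) ?_
        rw [div_le_iff₀ h4r]
        have : Δ ≤ 4 ^ r * (ν (P a)).toReal := by linarith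
        linarith
      exact ENNReal.ofReal_le_of_le_toReal h7
    · -- all other points of α are far from the support: contradiction with optimality
      push_neg at hdist
      exfalso
      obtain ⟨z, hzm, hzd, hzb⟩ := hsel {a} (Finset.singleton_nonempty a) (by simp only [Finset.card_singleton]; omega)
      rw [Finset.coe_singleton, infDist_singleton] at hzd
      set γ2 : Finset E := insert a {z} with hγ2def
      have hγ2ne : γ2.Nonempty := ⟨a, Finset.mem_insert_self _ _⟩
      have hγ2c : γ2.card ≤ n := by
        refine le_trans (le_trans (Finset.card_insert_le _ _) ?_) hn
        simp
      set g : E → ℝ := fun x => min (dist x a) 2 ^ r with hgdef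
      have hg_cont : Continuous g :=
        ((continuous_id.dist continuous_const).min continuous_const).rpow_const
          (fun x => Or.inr hr.le)
      have hg_nonneg : ∀ x, 0 ≤ g x := fun x =>
        Real.rpow_nonneg (le_min dist_nonneg (by norm_num)) _
      have hg_int : Integrable g ν := by
        refine Integrable.mono' (integrable_const ((2:ℝ) ^ r)) hg_cont.aestronglyMeasurable ?_
        apply Filter.Eventually.of_forall
        intro x
        rw [Real.norm_of_nonneg (hg_nonneg x)]
        exact Real.rpow_le_rpow (le_min dist_nonneg (by norm_num)) (min_le_right _ _) hr.le
      have hgain : ∫ x, infDist x (γ2:Set E) ^ r ∂ν ≤ ∫ x, g x ∂ν - g0 * μ0 := by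
        apply aux_gain ν z ε hε μ0 hμ0.le hzb g0 hg0.le _ g (hint γ2 hγ2ne) hg_int
        · filter_upwards [aux_ae_msupp ν] with x hx
          apply Real.rpow_le_rpow infDist_nonneg ?_ hr.le
          apply le_min
          · exact infDist_le_dist_of_mem (by simp [hγ2def])
          · refine le_trans (infDist_le_dist_of_mem (s := (γ2:Set E)) (x := x) (y := z)
              (by simp [hγ2def])) ?_
            exact le_trans ((dist_le_diam_of_mem hbdd hx hzm).trans hdiam) one_le_two
        · intro x hx
          rw [mem_ball] at hx
          have hf : infDist x (γ2:Set E) ^ r ≤ (ε/8) ^ r := by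
            apply Real.rpow_le_rpow infDist_nonneg ?_ hr.le
            exact le_trans (infDist_le_dist_of_mem (by simp [hγ2def])) hx.le
          have hgx : (7*ε/8) ^ r ≤ g x := by
            apply Real.rpow_le_rpow (by positivity) ?_ hr.le
            apply le_min
            · have h := dist_triangle z x a
              rw [dist_comm z x] at h
              linarith
            · linarith
          simp only [hg0def]
          linarith
      have hgle : ∫ x, g x ∂ν ≤ V := by
        simp only [hVdef]
        apply integral_mono_ae hg_int (hint α hαne)
        filter_upwards [aux_ae_msupp ν] with x hx
        obtain ⟨b, hbα, hbeq⟩ := (α.finite_toSet.isCompact).exists_infDist_eq_dist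
          (by exact_mod_cast hαne) x
        apply Real.rpow_le_rpow (le_min dist_nonneg (by norm_num)) ?_ hr.le
        rw [hbeq]
        rcases eq_or_ne b a with rfl | hba
        · exact min_le_left _ _
        · have hbβ : b ∈ (β:Set E) := by
            simp only [hβdef, Finset.coe_erase, Set.mem_diff, Set.mem_singleton_iff]
            exact ⟨hbα, hba⟩
          have h1 : infDist x (β:Set E) ≤ dist x b := infDist_le_dist_of_mem hbβ
          have h2 : infDist x0 (β:Set E) ≤ infDist x (β:Set E) + dist x0 x :=
            infDist_le_infDist_add_dist
          have h3 : dist x0 x ≤ 1 := by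
            rw [dist_comm]
            exact (dist_le_diam_of_mem hbdd hx hx0).trans hdiam
          have hb2 : (2:ℝ) ≤ dist x b := by linarith
          exact (min_le_right _ _).trans hb2
      have hVle : V ≤ ∫ x, infDist x (γ2:Set E) ^ r ∂ν := by
        have h := hQle γ2 hγ2ne hγ2c
        rw [← hαopt] at h
        exact h
      linarith
end

section
/- For each integer j ≥ 2 there exists a constant ζ_j > 0, depending only on C1, C2, s0, r, q and j (in particular independent of k and of the center), such that for every k ≥ k0, every x ∈ K, and every radius ρ with (7/8)·m^{-k} ≤ ρ ≤ (5/2)·m^{-k}, the ball B := B(x,ρ) satisfies e_{j-1,r}(λ_B)^r − e_{j,r}(λ_B)^r ≥ ζ_j. In particular, for every σ ∈ Ω_k this holds for each of the four balls B(c_σ,(7/8)m^{-k}), E_σ = B(c_σ,m^{-k}), B(c_σ,(9/8)m^{-k}) and B(c_σ,(5/2)m^{-k}). -/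
set_option linter.unusedSectionVars false
set_option maxHeartbeats 1600000


open MeasureTheory Metric Set

noncomputable section Aux
variable {E : Type*} [NormedAddCommGroup E] [NormedSpace ℝ E]
  [MeasurableSpace E] [BorelSpace E]

lemma auxZ_le_infDist {s : Set E} (hs : s.Nonempty) {x : E} {d : ℝ}
    (h : ∀ y ∈ s, d ≤ dist x y) : d ≤ infDist x s := by
  by_contra hlt
  obtain ⟨y, hy, hxy⟩ := (infDist_lt_iff hs).1 (not_le.1 hlt)
  exact absurd (h y hy) (not_le.2 hxy)

lemma auxZ_diam_closedBall [Nontrivial E] (x : E) {ρ : ℝ} (hρ : 0 ≤ ρ) :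
    diam (closedBall x ρ) = 2 * ρ := by
  refine le_antisymm (diam_closedBall hρ) ?_
  obtain ⟨v, hv⟩ := exists_ne (0 : E)
  set u := (ρ / ‖v‖) • v with hu_def
  have hvn : ‖v‖ ≠ 0 := norm_ne_zero_iff.2 hv
  have hu : ‖u‖ = ρ := by
    rw [hu_def, norm_smul, Real.norm_eq_abs, abs_div, abs_norm, abs_of_nonneg hρ]
    field_simp
  have h1 : x + u ∈ closedBall x ρ := by
    simp only [mem_closedBall, dist_eq_norm, add_sub_cancel_left, hu, le_refl]
  have h2 : x - u ∈ closedBall x ρ := by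
    simp only [mem_closedBall, dist_eq_norm, sub_sub_cancel_left, norm_neg, hu, le_refl]
  have hd : dist (x + u) (x - u) = 2 * ρ := by
    rw [dist_eq_norm]
    have : x + u - (x - u) = (2:ℝ) • u := by
      rw [two_smul]; abel
    rw [this, norm_smul, Real.norm_eq_abs, hu]
    norm_num
  have := dist_le_diam_of_mem isBounded_closedBall h1 h2
  linarith [this, hd ▸ this]

lemma auxZ_simil {h : E → E} {D : ℝ} (hD : 0 < D) (hs : Function.Surjective h)
    (hdist : ∀ x y, dist (h x) (h y) = D * dist x y) :
    MeasurableEmbedding h ∧ (∀ z t, 0 ≤ t → h '' closedBall z t = closedBall (h z) (D * t)) := by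
  have hinj : Function.Injective h := by
    intro a b hab
    have h1 := hdist a b
    rw [hab, dist_self] at h1
    have h2 : dist a b = 0 := by
      by_contra hne
      have := dist_nonneg (x := a) (y := b)
      have hpos : 0 < dist a b := lt_of_le_of_ne this (Ne.symm hne)
      nlinarith
    exact eq_of_dist_eq_zero h2
  have hcont : Continuous h := by
    refine (LipschitzWith.of_dist_le_mul (K := ⟨D, hD.le⟩) fun a b => ?_).continuous
    exact (hdist a b).le
  let ψ : E ≃ E := Equiv.ofBijective h ⟨hinj, hs⟩
  have hψ : ∀ w, ψ w = h w := fun w => rfl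
  have hcont' : Continuous ψ.symm := by
    refine (LipschitzWith.of_dist_le_mul (K := ⟨D⁻¹, by positivity⟩) fun a b => ?_).continuous
    have h1 : h (ψ.symm a) = a := ψ.apply_symm_apply a
    have h2 : h (ψ.symm b) = b := ψ.apply_symm_apply b
    have h3 := hdist (ψ.symm a) (ψ.symm b)
    rw [h1, h2] at h3
    show dist (ψ.symm a) (ψ.symm b) ≤ D⁻¹ * dist a b
    rw [h3]
    rw [← mul_assoc, inv_mul_cancel₀ hD.ne', one_mul]
  let H : E ≃ₜ E := { ψ with continuous_toFun := hcont, continuous_invFun := hcont' }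
  refine ⟨H.measurableEmbedding, fun z t ht => ?_⟩
  ext u
  simp only [mem_image, mem_closedBall]
  constructor
  · rintro ⟨w, hw, rfl⟩
    rw [hdist]
    exact mul_le_mul_of_nonneg_left hw hD.le
  · intro hu
    obtain ⟨w, rfl⟩ := hs u
    refine ⟨w, ?_, rfl⟩
    rw [hdist] at hu
    exact le_of_mul_le_mul_left hu hD

lemma auxZ_msupp_compl [SecondCountableTopology E] (μ : Measure E) : μ (msupp μ)ᶜ = 0 := by
  apply measure_null_of_locally_null
  intro x hx
  simp only [msupp, mem_compl_iff, mem_setOf_eq, not_forall] at hx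
  obtain ⟨ε, hε, hball⟩ := hx
  exact ⟨ball x ε, mem_nhdsWithin_of_mem_nhds (ball_mem_nhds x hε),
    le_antisymm (not_lt.1 hball) zero_le⟩

lemma auxZ_exists_msupp_point [SecondCountableTopology E] (μ : Measure E) {T : Set E}
    (hT : μ T ≠ 0) : ∃ y ∈ T, y ∈ msupp μ := by
  by_contra hc
  push_neg at hc
  exact hT (measure_mono_null (fun y hy => hc y hy) (auxZ_msupp_compl μ))

lemma auxZ_packing [SecondCountableTopology E] (μ : Measure E)
    {C1 C2 s0 : ℝ} (hC2 : 0 < C2) (hs0 : 0 < s0)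
    (hup : ∀ z : E, ∀ ε : ℝ, 0 < ε → μ (closedBall z ε) ≤ ENNReal.ofReal (C2 * ε ^ s0))
    {x : E} {R d : ℝ} (hd : 0 < d)
    (hlow : ENNReal.ofReal (C1 * R ^ s0) ≤ μ (closedBall x R))
    (j : ℕ) (hlt : ∀ n : ℕ, n < j → (n : ℝ) * (C2 * d ^ s0) < C1 * R ^ s0) :
    ∃ y : Fin j → E, (∀ i, y i ∈ msupp μ ∧ y i ∈ closedBall x R) ∧
      ∀ i i', i ≠ i' → d ≤ dist (y i) (y i') := by
  have key : ∀ n : ℕ, n ≤ j → ∃ y : ℕ → E, ∀ i < n,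
      (y i ∈ msupp μ ∧ y i ∈ closedBall x R ∧ ∀ l < i, d ≤ dist (y i) (y l)) := by
    intro n hn
    induction n with
    | zero => exact ⟨fun _ => x, fun i hi => absurd hi (Nat.not_lt_zero i)⟩
    | succ n ih =>
      obtain ⟨y, hy⟩ := ih (Nat.le_of_succ_le hn)
      set T := closedBall x R \ ⋃ i ∈ Finset.range n, ball (y i) d with hT_def
      have hTne : μ T ≠ 0 := by
        intro hT0
        have hsub : closedBall x R ⊆ T ∪ ⋃ i ∈ Finset.range n, ball (y i) d := by
          intro w hw
          by_cases hwu : w ∈ ⋃ i ∈ Finset.range n, ball (y i) d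
          · exact Or.inr hwu
          · exact Or.inl ⟨hw, hwu⟩
        have hmeas : μ (closedBall x R) ≤ ENNReal.ofReal ((n : ℝ) * (C2 * d ^ s0)) := by
          calc μ (closedBall x R) ≤ μ T + μ (⋃ i ∈ Finset.range n, ball (y i) d) :=
                le_trans (measure_mono hsub) (measure_union_le _ _)
            _ = μ (⋃ i ∈ Finset.range n, ball (y i) d) := by rw [hT0, zero_add]
            _ ≤ ∑ i ∈ Finset.range n, μ (ball (y i) d) := measure_biUnion_finset_le _ _
            _ ≤ ∑ i ∈ Finset.range n, ENNReal.ofReal (C2 * d ^ s0) := by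
                refine Finset.sum_le_sum fun i _ => ?_
                exact le_trans (measure_mono ball_subset_closedBall) (hup (y i) d hd)
            _ = n * ENNReal.ofReal (C2 * d ^ s0) := by
                rw [Finset.sum_const, Finset.card_range, nsmul_eq_mul]
            _ = ENNReal.ofReal ((n : ℝ) * (C2 * d ^ s0)) := by
                rw [← ENNReal.ofReal_natCast n, ← ENNReal.ofReal_mul (Nat.cast_nonneg n)]
        have h1 : ENNReal.ofReal (C1 * R ^ s0) ≤ ENNReal.ofReal ((n : ℝ) * (C2 * d ^ s0)) :=
          le_trans hlow hmeas
        have h2 : C1 * R ^ s0 ≤ (n : ℝ) * (C2 * d ^ s0) :=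
          (ENNReal.ofReal_le_ofReal_iff (by positivity)).1 h1
        exact absurd h2 (not_le.2 (hlt n hn))
      obtain ⟨ynew, hynewT, hynewm⟩ := auxZ_exists_msupp_point μ hTne
      refine ⟨fun i => if i < n then y i else ynew, fun i hi => ?_⟩
      by_cases hin : i < n
      · obtain ⟨hm, hb, hsep⟩ := hy i hin
        refine ⟨by simpa [hin] using hm, by simpa [hin] using hb, fun l hl => ?_⟩
        have hln : l < n := lt_trans hl hin
        simpa [hin, hln] using hsep l hl
      · have hie : i = n := by omega
        subst hie
        simp only [if_neg (lt_irrefl _)]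
        refine ⟨hynewm, hynewT.1, fun l hl => ?_⟩
        simp only [if_pos hl]
        have : ynew ∉ ball (y l) d := fun hmem =>
          hynewT.2 (mem_biUnion (Finset.mem_range.2 hl) hmem)
        simpa [dist_comm] using not_lt.1 (fun hc => this (mem_ball'.2 hc))
  obtain ⟨y, hy⟩ := key j le_rfl
  refine ⟨fun i => y i, fun i => ⟨(hy i i.isLt).1, (hy i i.isLt).2.1⟩, fun i i' hne => ?_⟩
  rcases lt_or_gt_of_ne (fun hc => hne (Fin.ext hc) : (i : ℕ) ≠ (i' : ℕ)) with hlt' | hlt'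
  · rw [dist_comm]
    exact (hy i' i'.isLt).2.2 i hlt'
  · exact (hy i i.isLt).2.2 i' hlt'

lemma auxZ_pigeonhole {j : ℕ} (hj : 1 ≤ j) (z : Fin j → E) {t : ℝ}
    (hsep : ∀ i i', i ≠ i' → 10 * t ≤ dist (z i) (z i'))
    (α : Finset E) (hcard : α.card ≤ j - 1) (ht : 0 < t) :
    ∃ i, ∀ a ∈ α, 4 * t ≤ dist (z i) a := by
  by_contra hc
  push_neg at hc
  choose a ha hlt using hc
  have hinj : Function.Injective fun i => (⟨a i, ha i⟩ : {w // w ∈ α}) := by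
    intro i i' he
    by_contra hne
    have h1 : a i = a i' := congrArg Subtype.val he
    have h2 := hsep i i' hne
    have h3 : dist (z i) (z i') ≤ dist (z i) (a i) + dist (a i') (z i') := by
      rw [h1]; exact dist_triangle _ _ _
    have h4 := hlt i
    have h5 := hlt i'
    rw [dist_comm] at h5
    linarith
  have hle := Fintype.card_le_of_injective _ hinj
  rw [Fintype.card_coe, Fintype.card_fin] at hle
  omega

lemma auxZ_integrable {ν : Measure E} [IsProbabilityMeasure ν] {r : ℝ} (hr : 0 < r)
    {z0 : E} {R : ℝ} (hR : 0 ≤ R) (hsupp : ν (closedBall z0 R)ᶜ = 0)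
    (α : Finset E) (hα : (α : Set E).Nonempty) :
    Integrable (fun w => infDist w (α : Set E) ^ r) ν := by
  obtain ⟨a0, ha0⟩ := hα
  have hcont : Continuous fun w => infDist w (α : Set E) ^ r :=
    (continuous_infDist_pt _).rpow_const (fun _ => Or.inr hr.le)
  refine Integrable.mono' (integrable_const ((R + dist z0 a0) ^ r))
    hcont.aestronglyMeasurable ?_
  have hmem : closedBall z0 R ∈ ae ν := mem_ae_iff.2 hsupp
  filter_upwards [hmem] with w hw
  rw [Real.norm_eq_abs, abs_of_nonneg (Real.rpow_nonneg infDist_nonneg r)]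
  refine Real.rpow_le_rpow infDist_nonneg ?_ hr.le
  calc infDist w (α : Set E) ≤ dist w a0 := infDist_le_dist_of_mem ha0
    _ ≤ dist w z0 + dist z0 a0 := dist_triangle _ _ _
    _ ≤ R + dist z0 a0 := by
        have := mem_closedBall.1 hw; linarith

lemma auxZ_quantSet_bddBelow (ν : Measure E) (r : ℝ) (n : ℕ) :
    BddBelow (quantSet ν r n) := by
  refine ⟨0, fun I hI => ?_⟩
  obtain ⟨α, -, -, rfl⟩ := hI
  exact integral_nonneg fun w => Real.rpow_nonneg infDist_nonneg r

lemma auxZ_gain {ν : Measure E} [IsProbabilityMeasure ν] {r : ℝ} (hr : 0 < r)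
    {z0 : E} {R : ℝ} (hR : 0 ≤ R) (hsupp : ν (closedBall z0 R)ᶜ = 0)
    {j : ℕ} (hj : 2 ≤ j) (z : Fin j → E) {t : ℝ} (ht : 0 < t)
    (hsep : ∀ i i', i ≠ i' → 10 * t ≤ dist (z i) (z i'))
    {c : ℝ} (hc : 0 < c) (hmass : ∀ i, c ≤ (ν (closedBall (z i) t)).toReal) :
    ((3 * t) ^ r - t ^ r) * c ≤ quantErrPow ν r (j - 1) - quantErrPow ν r j := by
  classical
  set ζ := ((3 * t) ^ r - t ^ r) * c with hζ_def
  have hne : (quantSet ν r (j - 1)).Nonempty := by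
    refine ⟨∫ w, infDist w (({z ⟨0, by omega⟩} : Finset E) : Set E) ^ r ∂ν, {z ⟨0, by omega⟩},
      Finset.singleton_nonempty _, ?_, rfl⟩
    simp only [Finset.card_singleton]
    omega
  have hkey : ∀ I ∈ quantSet ν r (j - 1), quantErrPow ν r j + ζ ≤ I := by
    rintro I ⟨α, hαne, hαcard, rfl⟩
    obtain ⟨i, hi⟩ := auxZ_pigeonhole (by omega) z hsep α hαcard ht
    set α' : Finset E := insert (z i) α with hα'_def
    have hα'ne : α'.Nonempty := Finset.insert_nonempty _ _
    have hα'card : α'.card ≤ j := by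
      have h9 := Finset.card_insert_le (z i) α
      rw [hα'_def]
      omega
    have hsubset : (α : Set E) ⊆ (α' : Set E) := by
      intro w hw
      simp only [hα'_def, Finset.coe_insert, mem_insert_iff]
      exact Or.inr hw
    have hαSne : (α : Set E).Nonempty := by
      obtain ⟨a, ha⟩ := hαne; exact ⟨a, ha⟩
    have hα'Sne : (α' : Set E).Nonempty := by
      obtain ⟨a, ha⟩ := hα'ne; exact ⟨a, ha⟩
    have hint : Integrable (fun w => infDist w (α : Set E) ^ r) ν :=
      auxZ_integrable hr hR hsupp α hαSne
    have hint' : Integrable (fun w => infDist w (α' : Set E) ^ r) ν :=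
      auxZ_integrable hr hR hsupp α' hα'Sne
    have hmono : ∀ w, infDist w (α' : Set E) ^ r ≤ infDist w (α : Set E) ^ r := fun w =>
      Real.rpow_le_rpow infDist_nonneg
        (infDist_le_infDist_of_subset hsubset hαSne) hr.le
    have hquant_le : quantErrPow ν r j ≤ ∫ w, infDist w (α' : Set E) ^ r ∂ν :=
      csInf_le (auxZ_quantSet_bddBelow ν r j) ⟨α', hα'ne, hα'card, rfl⟩
    -- gain on the ball around z i
    have hball_lb : ∀ w ∈ closedBall (z i) t,
        (3 * t) ^ r - t ^ r ≤ infDist w (α : Set E) ^ r - infDist w (α' : Set E) ^ r := by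
      intro w hw
      have hw' := mem_closedBall.1 hw
      have h1 : (3 : ℝ) * t ≤ infDist w (α : Set E) := by
        refine auxZ_le_infDist hαSne fun a ha => ?_
        have h4 := hi a ha
        have h5 : dist (z i) a ≤ dist (z i) w + dist w a := dist_triangle _ _ _
        rw [dist_comm (z i) w] at h5
        linarith
      have h2 : infDist w (α' : Set E) ≤ t := by
        refine le_trans (infDist_le_dist_of_mem ?_) hw'
        rw [hα'_def, Finset.coe_insert]
        exact mem_insert _ _
      have h3 : (3 * t) ^ r ≤ infDist w (α : Set E) ^ r :=
        Real.rpow_le_rpow (by positivity) h1 hr.le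
      have h6 : infDist w (α' : Set E) ^ r ≤ t ^ r :=
        Real.rpow_le_rpow infDist_nonneg h2 hr.le
      linarith
    have hdiff_int : Integrable
        (fun w => infDist w (α : Set E) ^ r - infDist w (α' : Set E) ^ r) ν :=
      hint.sub hint'
    have hstep1 : ((3 * t) ^ r - t ^ r) * (ν (closedBall (z i) t)).toReal ≤
        ∫ w in closedBall (z i) t,
          (infDist w (α : Set E) ^ r - infDist w (α' : Set E) ^ r) ∂ν :=
      by have := setIntegral_ge_of_const_le_real measurableSet_closedBall (measure_ne_top ν _)
           hball_lb hdiff_int.integrableOn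
         rwa [measureReal_def] at this
    have hstep2 : ∫ w in closedBall (z i) t,
          (infDist w (α : Set E) ^ r - infDist w (α' : Set E) ^ r) ∂ν ≤
        ∫ w, (infDist w (α : Set E) ^ r - infDist w (α' : Set E) ^ r) ∂ν :=
      setIntegral_le_integral hdiff_int
        (Filter.Eventually.of_forall fun w => sub_nonneg.2 (hmono w))
    have hfac : t ^ r ≤ (3 * t) ^ r :=
      Real.rpow_le_rpow ht.le (by linarith) hr.le
    have hζle : ζ ≤ ((3 * t) ^ r - t ^ r) * (ν (closedBall (z i) t)).toReal := by
      rw [hζ_def]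
      exact mul_le_mul_of_nonneg_left (hmass i) (by linarith)
    have hsplit : ∫ w, (infDist w (α : Set E) ^ r - infDist w (α' : Set E) ^ r) ∂ν =
        (∫ w, infDist w (α : Set E) ^ r ∂ν) - ∫ w, infDist w (α' : Set E) ^ r ∂ν :=
      integral_sub hint hint'
    have : ζ ≤ (∫ w, infDist w (α : Set E) ^ r ∂ν) - ∫ w, infDist w (α' : Set E) ^ r ∂ν := by
      rw [← hsplit]
      exact le_trans hζle (le_trans hstep1 hstep2)
    linarith
  have hfinal : quantErrPow ν r j + ζ ≤ quantErrPow ν r (j - 1) :=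
    le_csInf hne hkey
  linarith

end Aux


/-- For each integer `j ≥ 2` there is `ζ_j > 0` (independent of `k` and of the
center) such that for every `k ≥ k0`, every `x ∈ K = supp μ` and every radius `ρ` with
`(7/8)·m^{-k} ≤ ρ ≤ (5/2)·m^{-k}`, the ball `B = B(x,ρ)` satisfies
`e_{j-1,r}(λ_B)^r − e_{j,r}(λ_B)^r ≥ ζ_j` (for any similitude `h` of ratio `diam B` used to
define `λ_B`). In particular this applies to the balls `B(c_σ,(7/8)m^{-k})`, `E_σ`,
`B(c_σ,(9/8)m^{-k})` and `B(c_σ,(5/2)m^{-k})` for `σ ∈ Ω_k`. -/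

theorem stmt10 {E : Type*} [NormedAddCommGroup E] [NormedSpace ℝ E]
    [MeasurableSpace E] [BorelSpace E] [FiniteDimensional ℝ E]
    (r : ℝ) (hr : 0 < r)
    (μ : MeasureTheory.Measure E) [MeasureTheory.IsProbabilityMeasure μ]
    (s0 ε0 C1 C2 : ℝ) (hμ : IsAhlfors μ s0 ε0 C1 C2)
    (m : ℕ) (hm : 2 ≤ m) (k0 : ℕ)
    (hk0 : 2 * ((m : ℝ) ^ k0)⁻¹ < ε0)
    (hk0min : ∀ j : ℕ, 2 * ((m : ℝ) ^ j)⁻¹ < ε0 → k0 ≤ j)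
    (j : ℕ) (hj : 2 ≤ j) :
    ∃ ζ : ℝ, 0 < ζ ∧ ∀ k : ℕ, k0 ≤ k → ∀ x ∈ msupp μ, ∀ ρ : ℝ,
      (7 / 8 : ℝ) * ((m : ℝ) ^ k)⁻¹ ≤ ρ → ρ ≤ (5 / 2 : ℝ) * ((m : ℝ) ^ k)⁻¹ →
      ∀ h : E → E, IsSimilitude h (Metric.diam (Metric.closedBall x ρ)) →
        ζ ≤ quantErrPow (condPull μ (Metric.closedBall x ρ) h) r (j - 1) -
              quantErrPow (condPull μ (Metric.closedBall x ρ) h) r j := by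
  obtain ⟨hs0, hε0, hC1, hC2, hreg, hglob⟩ := hμ
  rcases subsingleton_or_nontrivial E with hsub | hnt
  · -- the hypotheses are contradictory in a subsingleton space
    refine ⟨1, one_pos, fun k hk x hx ρ hρl hρu h hsim => ?_⟩
    exfalso
    set b := min (1/2 : ℝ) (1/(2*C2)) with hb_def
    have hb : 0 < b := lt_min (by norm_num) (by positivity)
    set ε := b ^ s0⁻¹ with hε_def
    have hεpos : 0 < ε := Real.rpow_pos_of_pos hb _
    have hcb : closedBall x ε = univ := by
      ext w
      simp [mem_closedBall, Subsingleton.elim w x, hεpos.le]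
    have h1 : μ (closedBall x ε) = 1 := by rw [hcb]; exact measure_univ
    have h2 := hglob x ε hεpos
    rw [h1] at h2
    have h3 : (1:ℝ) ≤ C2 * ε ^ s0 := ENNReal.one_le_ofReal.1 h2
    have h4 : ε ^ s0 = b := Real.rpow_inv_rpow hb.le hs0.ne'
    rw [h4] at h3
    have h5 : b ≤ 1/(2*C2) := min_le_right _ _
    have h6 : C2 * b ≤ 1/2 := by
      calc C2 * b ≤ C2 * (1/(2*C2)) := mul_le_mul_of_nonneg_left h5 hC2.le
        _ = 1/2 := by field_simp
    linarith
  · -- main case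
    have hj0 : (0:ℝ) < (j:ℝ) := by positivity
    have hj2 : (2:ℝ) ≤ (j:ℝ) := by exact_mod_cast hj
    have hQ0 : (0:ℝ) < (2:ℝ) ^ s0 := Real.rpow_pos_of_pos two_pos s0
    have hA0 : (0:ℝ) < C1 / ((j:ℝ) * C2 * (2:ℝ) ^ s0) := by positivity
    set δ := min 1 ((C1 / ((j:ℝ) * C2 * (2:ℝ) ^ s0)) ^ s0⁻¹) with hδ_def
    have hδ0 : 0 < δ := lt_min one_pos (Real.rpow_pos_of_pos hA0 _)
    have hδ1 : δ ≤ 1 := min_le_left _ _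
    have hδA : δ ^ s0 ≤ C1 / ((j:ℝ) * C2 * (2:ℝ) ^ s0) := by
      calc δ ^ s0 ≤ ((C1 / ((j:ℝ) * C2 * (2:ℝ) ^ s0)) ^ s0⁻¹) ^ s0 :=
            Real.rpow_le_rpow hδ0.le (min_le_right _ _) hs0.le
        _ = C1 / ((j:ℝ) * C2 * (2:ℝ) ^ s0) := Real.rpow_inv_rpow hA0.le hs0.ne'
    set t := δ / 20 with ht_def
    have ht : 0 < t := by positivity
    set c := (C1 / C2) * (δ / 10) ^ s0 with hc_def
    have hc : 0 < c := by positivity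
    have htr : t ^ r < (3*t) ^ r := Real.rpow_lt_rpow ht.le (by linarith) hr
    refine ⟨((3*t)^r - t^r) * c, mul_pos (by linarith) hc, fun k hk x hx ρ hρl hρu h hsim => ?_⟩
    -- basic bounds on ρ
    have hm1 : (1:ℝ) ≤ (m:ℝ) := by
      have : (2:ℝ) ≤ (m:ℝ) := by exact_mod_cast hm
      linarith
    have hmk0 : (0:ℝ) < ((m:ℝ)^k)⁻¹ := by positivity
    have hmkle : ((m:ℝ)^k)⁻¹ ≤ ((m:ℝ)^k0)⁻¹ :=
      inv_anti₀ (by positivity) (pow_le_pow_right₀ hm1 hk)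
    have hρ0 : 0 < ρ := lt_of_lt_of_le (by positivity) hρl
    have hρε : ρ < (5/4) * ε0 := by
      have h1 : ρ ≤ (5/2) * ((m:ℝ)^k0)⁻¹ := le_trans hρu (by linarith)
      linarith
    have hρ2ε : ρ/2 < ε0 := by linarith
    -- similitude facts
    rw [auxZ_diam_closedBall x hρ0.le] at hsim
    obtain ⟨hsurj, hdist⟩ := hsim
    obtain ⟨ME, himg⟩ := auxZ_simil (by linarith : (0:ℝ) < 2*ρ) hsurj hdist
    have hbij : Function.Bijective h := ⟨ME.injective, hsurj⟩
    -- the conditioned measure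
    have hball := hx ρ hρ0
    have hμB0 : μ (closedBall x ρ) ≠ 0 :=
      (lt_of_lt_of_le hball (measure_mono ball_subset_closedBall)).ne'
    have hν_apply : ∀ S : Set E, condPull μ (closedBall x ρ) h S
        = (μ (closedBall x ρ))⁻¹ * μ (closedBall x ρ ∩ h '' S) := by
      intro S
      rw [condPull, ME.comap_apply, ProbabilityTheory.cond_apply measurableSet_closedBall]
    haveI hνP : IsProbabilityMeasure (condPull μ (closedBall x ρ) h) := by
      constructor
      rw [hν_apply, image_univ, hsurj.range_eq, inter_univ,
        ENNReal.inv_mul_cancel hμB0 (measure_ne_top μ _)]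
    obtain ⟨z0, hz0⟩ := hsurj x
    have hsupp : condPull μ (closedBall x ρ) h (closedBall z0 (1/2))ᶜ = 0 := by
      rw [hν_apply]
      have himg2 : h '' (closedBall z0 (1/2))ᶜ = (closedBall x ρ)ᶜ := by
        rw [Set.image_compl_eq hbij, himg z0 (1/2) (by norm_num), hz0]
        have : 2*ρ*(1/2) = ρ := by ring
        rw [this]
      rw [himg2, inter_compl_self, measure_empty, mul_zero]
    -- packing in the support
    have hlow : ENNReal.ofReal (C1 * (ρ/2) ^ s0) ≤ μ (closedBall x (ρ/2)) :=
      (hreg x hx (ρ/2) (by positivity) hρ2ε).1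
    have hlt : ∀ n : ℕ, n < j → (n:ℝ) * (C2 * (δ*ρ)^s0) < C1 * (ρ/2)^s0 := by
      intro n hn
      have hδs : 0 < δ ^ s0 := Real.rpow_pos_of_pos hδ0 _
      have hP : 0 < ρ ^ s0 := Real.rpow_pos_of_pos hρ0 _
      have hkey : δ^s0 * ((j:ℝ)*C2*(2:ℝ)^s0) ≤ C1 := (le_div_iff₀ (by positivity)).1 hδA
      have hn' : (n:ℝ) ≤ (j:ℝ) - 1 := by
        have h7 : (n:ℝ) + 1 ≤ (j:ℝ) := by exact_mod_cast hn
        linarith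
      rw [Real.mul_rpow hδ0.le hρ0.le, Real.div_rpow hρ0.le (by norm_num : (0:ℝ) ≤ 2)]
      have hgoal : (n:ℝ) * (C2 * (δ^s0 * ρ^s0)) * ((2:ℝ)^s0) < C1 * ρ^s0 := by
        nlinarith [mul_le_mul_of_nonneg_right hkey hP.le,
          mul_pos (mul_pos hδs hC2) (mul_pos hQ0 hP),
          mul_le_mul_of_nonneg_right hn'
            (by positivity : (0:ℝ) ≤ C2 * (δ^s0 * ρ^s0) * (2:ℝ)^s0)]
      calc (n:ℝ) * (C2 * (δ^s0 * ρ^s0)) < C1 * ρ^s0 / (2:ℝ)^s0 := (lt_div_iff₀ hQ0).2 hgoal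
        _ = C1 * (ρ^s0 / (2:ℝ)^s0) := by ring
    obtain ⟨y, hymem, hysep⟩ := auxZ_packing μ hC2 hs0 hglob
      (mul_pos hδ0 hρ0) hlow j hlt
    -- pull the points back through h
    choose z hz using fun i => hsurj (y i)
    have hsep_z : ∀ i i', i ≠ i' → 10 * t ≤ dist (z i) (z i') := by
      intro i i' hne
      have hd := hdist (z i) (z i')
      rw [hz i, hz i'] at hd
      have h10 := hysep i i' hne
      nlinarith [dist_nonneg (x := z i) (y := z i')]
    -- mass of small balls
    have hmass : ∀ i, c ≤ ((condPull μ (closedBall x ρ) h) (closedBall (z i) t)).toReal := by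
      intro i
      have hyx : y i ∈ closedBall x (ρ/2) := (hymem i).2
      have hym : y i ∈ msupp μ := (hymem i).1
      have h2t : 0 < 2*ρ*t := mul_pos (by linarith : (0:ℝ) < 2*ρ) ht
      have ht20 : t ≤ 1/20 := by rw [ht_def]; linarith
      have h2tm : 2*ρ*t ≤ 2*ρ*(1/20) :=
        mul_le_mul_of_nonneg_left ht20 (by linarith : (0:ℝ) ≤ 2*ρ)
      have h2tε : 2*ρ*t < ε0 := by linarith
      have hsub_i : closedBall (y i) (2*ρ*t) ⊆ closedBall x ρ := by
        intro w hw
        have hw1 := mem_closedBall.1 hw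
        have hw2 := mem_closedBall.1 hyx
        have : dist w x ≤ dist w (y i) + dist (y i) x := dist_triangle _ _ _
        rw [mem_closedBall]
        nlinarith
      have hlow_i : ENNReal.ofReal (C1 * (2*ρ*t)^s0) ≤ μ (closedBall (y i) (2*ρ*t)) :=
        (hreg (y i) hym (2*ρ*t) h2t h2tε).1
      have hBub := hglob x ρ hρ0
      have e1 : ENNReal.ofReal (C1*(2*ρ*t)^s0) / ENNReal.ofReal (C2*ρ^s0)
          ≤ μ (closedBall (y i) (2*ρ*t)) / μ (closedBall x ρ) :=
        ENNReal.div_le_div hlow_i hBub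
      have e2 : μ (closedBall (y i) (2*ρ*t)) / μ (closedBall x ρ)
          = (μ (closedBall x ρ))⁻¹ * μ (closedBall x ρ ∩ closedBall (y i) (2*ρ*t)) := by
        rw [inter_eq_self_of_subset_right hsub_i, div_eq_mul_inv, mul_comm]
      have e3 : ENNReal.ofReal c ≤
          ENNReal.ofReal (C1*(2*ρ*t)^s0) / ENNReal.ofReal (C2*ρ^s0) := by
        rw [ENNReal.le_div_iff_mul_le (Or.inl (by positivity : ENNReal.ofReal (C2*ρ^s0) ≠ 0))
          (Or.inl ENNReal.ofReal_ne_top)]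
        rw [← ENNReal.ofReal_mul hc.le]
        apply ENNReal.ofReal_le_ofReal
        have hteq : 2*ρ*t = ρ * (δ/10) := by rw [ht_def]; ring
        rw [hteq, Real.mul_rpow hρ0.le (by positivity)]
        have heq : c * (C2*ρ^s0) = C1 * (ρ^s0 * (δ/10)^s0) := by
          rw [hc_def]; field_simp
        linarith [le_of_eq heq]
      have e4 : ENNReal.ofReal c ≤ (condPull μ (closedBall x ρ) h) (closedBall (z i) t) := by
        rw [hν_apply, himg (z i) t ht.le, hz i]
        calc ENNReal.ofReal c ≤ ENNReal.ofReal (C1*(2*ρ*t)^s0) / ENNReal.ofReal (C2*ρ^s0) := e3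
          _ ≤ μ (closedBall (y i) (2*ρ*t)) / μ (closedBall x ρ) := e1
          _ = (μ (closedBall x ρ))⁻¹ * μ (closedBall x ρ ∩ closedBall (y i) (2*ρ*t)) := e2
      exact (ENNReal.ofReal_le_iff_le_toReal (measure_ne_top _ _)).1 e4
    exact auxZ_gain hr (by norm_num : (0:ℝ) ≤ 1/2) hsupp hj z ht hsep_z hc hmass
end
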